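/- arXiv:2410.11613 — 3 statements merged into one kernel-verified Lean document; each statement's English description precedes it below -/
import Mathlib

section
/- Let B ∈ ℝ^{n×n} and let ω be a random vector in ℝ^n with i.i.d. standard Gaussian N(0,1) entries. Then for every index i, the i-th entry of the single-sample estimation error e := ω ⊙ (Bω) − diag(B) has mean zero and satisfies E[(e_i)²] = B_{ii}² + ‖[B]_{i,:}‖₂², where ‖[B]_{i,:}‖₂ is the Euclidean norm of the i-th row of B. -/
open MeasureTheory ProbabilityTheory Real
open scoped ENNReal NNReal

/- ### Auxiliary lemmas -/

private lemma pi_integral (n : ℕ) (f : Fin n → ℝ → ℝ) :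
    ∫ ω, ∏ l, f l (ω l) ∂(Measure.pi fun _ : Fin n => gaussianReal 0 1)
      = ∏ l, ∫ x, f l x ∂(gaussianReal 0 1) := by
  letI : MeasureSpace ℝ := ⟨gaussianReal 0 1⟩
  haveI : SigmaFinite (volume : Measure ℝ) := inferInstanceAs (SigmaFinite (gaussianReal 0 1))
  exact MeasureTheory.integral_fin_nat_prod_eq_prod f

private lemma pi_integrable (n : ℕ) (f : Fin n → ℝ → ℝ)
    (hf : ∀ l, Integrable (f l) (gaussianReal 0 1)) :
    Integrable (fun ω => ∏ l, f l (ω l)) (Measure.pi fun _ : Fin n => gaussianReal 0 1) := by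
  letI : MeasureSpace ℝ := ⟨gaussianReal 0 1⟩
  haveI : SigmaFinite (volume : Measure ℝ) := inferInstanceAs (SigmaFinite (gaussianReal 0 1))
  exact MeasureTheory.Integrable.fin_nat_prod hf

private lemma gauss_int_pow (k : ℕ) :
    Integrable (fun x : ℝ => x ^ k * Real.exp (-(2⁻¹ : ℝ) * x ^ 2)) := by
  have h := integrable_rpow_mul_exp_neg_mul_sq (b := 2⁻¹) (by norm_num)
    (s := (k : ℝ)) (lt_of_lt_of_le neg_one_lt_zero (Nat.cast_nonneg k))
  simpa [Real.rpow_natCast] using h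

private lemma gauss_pow_integrable (k : ℕ) :
    Integrable (fun x : ℝ => x ^ k) (gaussianReal 0 1) := by
  rw [gaussianReal_of_var_ne_zero 0 one_ne_zero, gaussianPDF_def]
  rw [show (fun x => ENNReal.ofReal (gaussianPDFReal 0 1 x))
      = fun x => ((gaussianPDFReal 0 1 x).toNNReal : ℝ≥0∞) from rfl]
  rw [integrable_withDensity_iff_integrable_smul ((measurable_gaussianPDFReal 0 1).real_toNNReal)]
  refine (((gauss_int_pow k).const_mul ((Real.sqrt (2 * Real.pi))⁻¹)).congr
    (Filter.Eventually.of_forall fun x => ?_))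
  show _ = (gaussianPDFReal 0 1 x).toNNReal • x ^ k
  rw [NNReal.smul_def, Real.coe_toNNReal _ (gaussianPDFReal_nonneg 0 1 x)]
  simp only [gaussianPDFReal, NNReal.coe_one, mul_one, sub_zero, smul_eq_mul]
  ring_nf

private lemma gauss_moment (k : ℕ) :
    ∫ x, x ^ k ∂(gaussianReal 0 1)
      = (Real.sqrt (2 * Real.pi))⁻¹ * ∫ x : ℝ, x ^ k * Real.exp (-(2⁻¹:ℝ) * x ^ 2) := by
  rw [gaussianReal_of_var_ne_zero 0 one_ne_zero, gaussianPDF_def]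
  rw [show (fun x => ENNReal.ofReal (gaussianPDFReal 0 1 x))
      = fun x => ((gaussianPDFReal 0 1 x).toNNReal : ℝ≥0∞) from rfl]
  rw [integral_withDensity_eq_integral_smul ((measurable_gaussianPDFReal 0 1).real_toNNReal) _]
  rw [← integral_const_mul]
  congr 1; funext x
  rw [NNReal.smul_def, Real.coe_toNNReal _ (gaussianPDFReal_nonneg 0 1 x)]
  simp only [gaussianPDFReal, NNReal.coe_one, mul_one, sub_zero]
  ring_nf

private lemma J_odd (k : ℕ) (hk : Odd k) :
    ∫ x : ℝ, x ^ k * Real.exp (-(2⁻¹:ℝ) * x ^ 2) = 0 := by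
  set f : ℝ → ℝ := fun x => x ^ k * Real.exp (-(2⁻¹:ℝ) * x ^ 2) with hf
  have h : ∫ x : ℝ, f (-x) = ∫ x : ℝ, f x :=
    (Measure.measurePreserving_neg (volume : Measure ℝ)).integral_comp
      (Homeomorph.neg ℝ).measurableEmbedding f
  have h2 : ∀ x : ℝ, f (-x) = -f x := by
    intro x
    simp only [hf, hk.neg_pow, neg_sq, neg_mul]
  simp_rw [h2, integral_neg] at h
  linarith

private lemma J_even (k : ℕ) :
    ∫ x : ℝ, x ^ (2 * k) * Real.exp (-(2⁻¹:ℝ) * x ^ 2)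
      = 2 * ((2⁻¹:ℝ) ^ (-(((2 * k : ℕ):ℝ) + 1)/2) * (1/2)
          * Real.Gamma ((((2 * k : ℕ):ℝ)+1)/2)) := by
  set f : ℝ → ℝ := fun x => x ^ (2 * k) * Real.exp (-(2⁻¹:ℝ) * x ^ 2) with hf
  have h2 : ∀ x : ℝ, f |x| = f x := by
    intro x
    simp only [hf, neg_mul, sq_abs, pow_mul]
  calc ∫ x : ℝ, f x = ∫ x : ℝ, f |x| := by simp_rw [h2]
    _ = 2 * ∫ x in Set.Ioi (0:ℝ), f x := integral_comp_abs
    _ = 2 * ∫ x in Set.Ioi (0:ℝ),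
          x ^ (((2 * k : ℕ)):ℝ) * Real.exp (-(2⁻¹:ℝ) * x ^ (2:ℝ)) := by
        congr 1
        refine setIntegral_congr_fun measurableSet_Ioi (fun x _ => ?_)
        rw [Real.rpow_natCast, Real.rpow_two]
    _ = _ := by
        rw [integral_rpow_mul_exp_neg_mul_rpow two_pos
          (lt_of_lt_of_le neg_one_lt_zero (Nat.cast_nonneg _)) (by norm_num)]

private lemma M_zero : ∫ x, x ^ 0 ∂(gaussianReal 0 1) = 1 := by simp

private lemma M_one : ∫ x, x ^ 1 ∂(gaussianReal 0 1) = 0 := by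
  rw [gauss_moment, J_odd 1 odd_one, mul_zero]

private lemma M_three : ∫ x, x ^ 3 ∂(gaussianReal 0 1) = 0 := by
  rw [gauss_moment, J_odd 3 (by decide), mul_zero]

private lemma sqrt2pi : Real.sqrt (2 * Real.pi) = Real.sqrt 2 * Real.sqrt Real.pi :=
  Real.sqrt_mul two_pos.le _

private lemma rpow_half (a : ℝ) : (2:ℝ) ^ (a + 1/2) = (2:ℝ) ^ a * Real.sqrt 2 := by
  rw [Real.rpow_add two_pos, Real.sqrt_eq_rpow]

private lemma inv_two_rpow (y : ℝ) : (2⁻¹:ℝ) ^ (-y) = (2:ℝ) ^ y := by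
  rw [Real.inv_rpow two_pos.le, Real.rpow_neg two_pos.le, inv_inv]

private lemma M_two : ∫ x, x ^ 2 ∂(gaussianReal 0 1) = 1 := by
  have h := J_even 1
  simp only [Nat.reduceMul, Nat.cast_ofNat] at h
  rw [gauss_moment, h]
  have e1 : (-((2:ℝ) + 1))/2 = -(1 + 1/2) := by norm_num
  have e2 : ((2:ℝ) + 1)/2 = 1/2 + 1 := by norm_num
  rw [e1, e2, inv_two_rpow, Real.Gamma_add_one (by norm_num), Real.Gamma_one_half_eq]
  rw [rpow_half, Real.rpow_one, sqrt2pi]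
  have h2 : Real.sqrt 2 * Real.sqrt 2 = 2 := Real.mul_self_sqrt two_pos.le
  have hπ : (0:ℝ) < Real.sqrt Real.pi := Real.sqrt_pos.mpr Real.pi_pos
  have h2' : (0:ℝ) < Real.sqrt 2 := Real.sqrt_pos.mpr two_pos
  field_simp

private lemma M_four : ∫ x, x ^ 4 ∂(gaussianReal 0 1) = 3 := by
  have h := J_even 2
  simp only [Nat.reduceMul, Nat.cast_ofNat] at h
  rw [gauss_moment, h]
  have e1 : (-((4:ℝ) + 1))/2 = -(1 + 1/2 + 1) := by norm_num
  have e2 : ((4:ℝ) + 1)/2 = 3/2 + 1 := by norm_num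
  rw [e1, e2, inv_two_rpow, Real.Gamma_add_one (by norm_num),
    show (3:ℝ)/2 = 1/2 + 1 by norm_num, Real.Gamma_add_one (by norm_num),
    Real.Gamma_one_half_eq]
  rw [show (1:ℝ) + 1/2 + 1 = 2 + 1/2 by ring, rpow_half, Real.rpow_two, sqrt2pi]
  norm_num
  have h2 : Real.sqrt 2 * Real.sqrt 2 = 2 := Real.mul_self_sqrt two_pos.le
  have hπ : (0:ℝ) < Real.sqrt Real.pi := Real.sqrt_pos.mpr Real.pi_pos
  have h2' : (0:ℝ) < Real.sqrt 2 := Real.sqrt_pos.mpr two_pos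
  field_simp
  nlinarith [h2, hπ, h2']

private lemma prod_if_single {n : ℕ} (F : Fin n → ℕ → ℝ) (h1 : ∀ l, F l 0 = 1)
    (a : Fin n) (p : ℕ) :
    ∏ l, F l (if l = a then p else 0) = F a p := by
  have h : ∀ l, F l (if l = a then p else 0) = if l = a then F a p else 1 := by
    intro l
    by_cases h : l = a
    · subst h; simp
    · simp [h, h1]
  simp_rw [h]
  simp [Finset.prod_ite_eq']

private lemma prod_if_pair {n : ℕ} (F : Fin n → ℕ → ℝ) (h1 : ∀ l, F l 0 = 1) {a b : Fin n}
    (hab : a ≠ b) (p q : ℕ) :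
    ∏ l, F l (if l = a then p else if l = b then q else 0) = F a p * F b q := by
  have h : ∀ l, F l (if l = a then p else if l = b then q else 0)
      = (if l = a then F a p else 1) * (if l = b then F b q else 1) := by
    intro l
    by_cases h : l = a
    · subst h; simp [hab]
    · by_cases h' : l = b
      · subst h'; simp [h]
      · simp [h, h', h1]
  simp_rw [h, Finset.prod_mul_distrib]
  simp [Finset.prod_ite_eq']

private lemma prod_if_triple {n : ℕ} (F : Fin n → ℕ → ℝ) (h1 : ∀ l, F l 0 = 1) {a b c : Fin n}
    (hab : a ≠ b) (hac : a ≠ c) (hbc : b ≠ c) (p q r : ℕ) :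
    ∏ l, F l (if l = a then p else if l = b then q else if l = c then r else 0)
      = F a p * F b q * F c r := by
  have h : ∀ l, F l (if l = a then p else if l = b then q else if l = c then r else 0)
      = (if l = a then F a p else 1) * (if l = b then F b q else 1)
        * (if l = c then F c r else 1) := by
    intro l
    by_cases h : l = a
    · subst h; simp [hab, hac]
    · by_cases h' : l = b
      · subst h'; simp [h, hbc]
      · by_cases h'' : l = c
        · subst h''; simp [h, h']
        · simp [h, h', h'', h1]
  simp_rw [h, Finset.prod_mul_distrib]
  simp [Finset.prod_ite_eq']

private lemma moment_single {n : ℕ} (a : Fin n) (p : ℕ) :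
    ∫ ω, (ω a) ^ p ∂(Measure.pi fun _ : Fin n => gaussianReal 0 1)
      = ∫ x, x ^ p ∂(gaussianReal 0 1) := by
  have e : ∀ ω : Fin n → ℝ, (ω a)^p = ∏ l, (ω l)^(if l = a then p else 0) :=
    fun ω => (prod_if_single (fun l t => (ω l)^t) (fun l => pow_zero _) a p).symm
  simp_rw [e]
  rw [pi_integral n (fun l x => x ^ (if l = a then p else 0))]
  exact prod_if_single (fun l t => ∫ x, x ^ t ∂(gaussianReal 0 1)) (fun l => M_zero) a p

private lemma moment_pair {n : ℕ} {a b : Fin n} (hab : a ≠ b) (p q : ℕ) :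
    ∫ ω, (ω a) ^ p * (ω b) ^ q ∂(Measure.pi fun _ : Fin n => gaussianReal 0 1)
      = (∫ x, x ^ p ∂(gaussianReal 0 1)) * ∫ x, x ^ q ∂(gaussianReal 0 1) := by
  have e : ∀ ω : Fin n → ℝ, (ω a)^p * (ω b)^q
      = ∏ l, (ω l)^(if l = a then p else if l = b then q else 0) :=
    fun ω => (prod_if_pair (fun l t => (ω l)^t) (fun l => pow_zero _) hab p q).symm
  simp_rw [e]
  rw [pi_integral n (fun l x => x ^ (if l = a then p else if l = b then q else 0))]
  exact prod_if_pair (fun l t => ∫ x, x ^ t ∂(gaussianReal 0 1)) (fun l => M_zero) hab p q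

private lemma moment_triple {n : ℕ} {a b c : Fin n} (hab : a ≠ b) (hac : a ≠ c) (hbc : b ≠ c)
    (p q r : ℕ) :
    ∫ ω, (ω a) ^ p * (ω b) ^ q * (ω c) ^ r ∂(Measure.pi fun _ : Fin n => gaussianReal 0 1)
      = (∫ x, x ^ p ∂(gaussianReal 0 1)) * (∫ x, x ^ q ∂(gaussianReal 0 1))
        * ∫ x, x ^ r ∂(gaussianReal 0 1) := by
  have e : ∀ ω : Fin n → ℝ, (ω a)^p * (ω b)^q * (ω c)^r
      = ∏ l, (ω l)^(if l = a then p else if l = b then q else if l = c then r else 0) :=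
    fun ω => (prod_if_triple (fun l t => (ω l)^t) (fun l => pow_zero _) hab hac hbc p q r).symm
  simp_rw [e]
  rw [pi_integral n (fun l x =>
    x ^ (if l = a then p else if l = b then q else if l = c then r else 0))]
  exact prod_if_triple (fun l t => ∫ x, x ^ t ∂(gaussianReal 0 1)) (fun l => M_zero)
    hab hac hbc p q r

private lemma P_integrable {n : ℕ} (a b c : Fin n) (p q r : ℕ) :
    Integrable (fun ω : Fin n → ℝ => (ω a) ^ p * (ω b) ^ q * (ω c) ^ r)
      (Measure.pi fun _ : Fin n => gaussianReal 0 1) := by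
  have h := pi_integrable n (fun l x => x ^ ((if l = a then p else 0)
    + ((if l = b then q else 0) + (if l = c then r else 0))))
    (fun l => gauss_pow_integrable _)
  refine h.congr (Filter.Eventually.of_forall fun ω => ?_)
  show ∏ l, (ω l) ^ ((if l = a then p else 0)
    + ((if l = b then q else 0) + (if l = c then r else 0))) = _
  calc ∏ l, (ω l) ^ ((if l = a then p else 0)
        + ((if l = b then q else 0) + (if l = c then r else 0)))
      = (∏ l, (ω l)^(if l = a then p else 0)) * ((∏ l, (ω l)^(if l = b then q else 0))
          * (∏ l, (ω l)^(if l = c then r else 0))) := by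
        simp_rw [pow_add, Finset.prod_mul_distrib]
    _ = (ω a)^p * ((ω b)^q * (ω c)^r) := by
        rw [prod_if_single (fun l t => (ω l)^t) (fun l => pow_zero _) a p,
          prod_if_single (fun l t => (ω l)^t) (fun l => pow_zero _) b q,
          prod_if_single (fun l t => (ω l)^t) (fun l => pow_zero _) c r]
    _ = (ω a)^p * (ω b)^q * (ω c)^r := by ring

/-- For `B ∈ ℝ^{n×n}` and `ω` a standard Gaussian vector in `ℝ^n`,
the `i`-th entry of the single-sample error `e := ω ⊙ (Bω) − diag B` has mean zero
and second moment `B i i ^ 2 + ‖[B]_{i,:}‖₂²`. -/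
theorem stmt_0 (n : ℕ) (B : Matrix (Fin n) (Fin n) ℝ) (i : Fin n)
    (P : Measure (Fin n → ℝ))
    (hP : P = Measure.pi fun _ : Fin n => gaussianReal 0 1) :
    (∫ ω, (ω i * B.mulVec ω i - B i i) ∂P) = 0 ∧
    (∫ ω, (ω i * B.mulVec ω i - B i i) ^ 2 ∂P) = B i i ^ 2 + ∑ j, B i j ^ 2 := by
  subst hP
  set P := Measure.pi fun _ : Fin n => gaussianReal 0 1 with hPdef
  haveI : IsProbabilityMeasure P := inferInstance
  -- expansion of the bilinear form
  have hmv : ∀ ω : Fin n → ℝ, ω i * B.mulVec ω i = ∑ j, B i j * (ω i * ω j) := by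
    intro ω
    simp only [Matrix.mulVec, dotProduct]
    rw [Finset.mul_sum]
    exact Finset.sum_congr rfl (fun j _ => by ring)
  -- first moments
  have T1 : ∀ j : Fin n, ∫ ω, ω i * ω j ∂P = if j = i then 1 else 0 := by
    intro j
    rcases eq_or_ne j i with rfl | hji
    · have e : ∀ ω : Fin n → ℝ, ω j * ω j = (ω j)^2 := fun ω => (sq _).symm
      simp_rw [e]
      rw [moment_single, M_two]
      simp
    · have e : ∀ ω : Fin n → ℝ, ω i * ω j = (ω i)^1 * (ω j)^1 := fun ω => by ring
      simp_rw [e]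
      rw [moment_pair (Ne.symm hji), M_one, if_neg hji, zero_mul]
  have Int1 : ∀ j : Fin n, Integrable (fun ω : Fin n → ℝ => ω i * ω j) P := by
    intro j
    have h := P_integrable i j j 1 1 0
    refine h.congr (Filter.Eventually.of_forall fun ω => ?_)
    simp
  -- second moments
  have T2 : ∀ j k : Fin n, ∫ ω, (ω i)^2 * (ω j * ω k) ∂P
      = if k = j then (if j = i then 3 else 1) else 0 := by
    intro j k
    rcases eq_or_ne k j with rfl | hkj
    · rcases eq_or_ne k i with rfl | hki
      · have e : ∀ ω : Fin n → ℝ, (ω k)^2 * (ω k * ω k) = (ω k)^4 := fun ω => by ring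
        simp_rw [e]
        rw [moment_single, M_four]
        simp
      · have e : ∀ ω : Fin n → ℝ, (ω i)^2 * (ω k * ω k) = (ω i)^2 * (ω k)^2 :=
          fun ω => by ring
        simp_rw [e]
        rw [moment_pair (Ne.symm hki), M_two]
        simp [hki]
    · rcases eq_or_ne j i with rfl | hji
      · have e : ∀ ω : Fin n → ℝ, (ω j)^2 * (ω j * ω k) = (ω j)^3 * (ω k)^1 :=
          fun ω => by ring
        simp_rw [e]
        rw [moment_pair (Ne.symm hkj), M_three, if_neg hkj, zero_mul]
      · rcases eq_or_ne k i with rfl | hki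
        · have e : ∀ ω : Fin n → ℝ, (ω k)^2 * (ω j * ω k) = (ω k)^3 * (ω j)^1 :=
            fun ω => by ring
          simp_rw [e]
          rw [moment_pair hkj, M_three, if_neg hkj, zero_mul]
        · have e : ∀ ω : Fin n → ℝ, (ω i)^2 * (ω j * ω k) = (ω i)^2 * (ω j)^1 * (ω k)^1 :=
            fun ω => by ring
          simp_rw [e]
          rw [moment_triple (Ne.symm hji) (Ne.symm hki) (Ne.symm hkj), M_one, if_neg hkj]
          ring
  have Int2 : ∀ j k : Fin n, Integrable (fun ω : Fin n → ℝ => (ω i)^2 * (ω j * ω k)) P := by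
    intro j k
    have h := P_integrable i j k 2 1 1
    refine h.congr (Filter.Eventually.of_forall fun ω => ?_)
    ring
  -- mean computation
  have HS1 : Integrable (fun ω : Fin n → ℝ => ∑ j, B i j * (ω i * ω j)) P :=
    integrable_finset_sum _ (fun j _ => (Int1 j).const_mul _)
  have mean1 : ∫ ω, (∑ j, B i j * (ω i * ω j)) ∂P = B i i := by
    rw [integral_finset_sum _ (fun j _ => (Int1 j).const_mul _)]
    simp_rw [integral_const_mul]
    simp [T1, mul_ite, mul_one, mul_zero, Finset.sum_ite_eq']
  have part1 : (∫ ω, (ω i * B.mulVec ω i - B i i) ∂P) = 0 := by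
    simp_rw [hmv]
    rw [integral_sub HS1 (integrable_const _), mean1, integral_const]
    simp
  refine ⟨part1, ?_⟩
  -- second moment
  have hsq : ∀ ω : Fin n → ℝ, (ω i * B.mulVec ω i - B i i)^2
      = (∑ j, ∑ k, (B i j * B i k) * ((ω i)^2 * (ω j * ω k)))
        - 2 * B i i * (∑ j, B i j * (ω i * ω j)) + B i i ^ 2 := by
    intro ω
    have e1 : (∑ j, B i j * (ω i * ω j))^2
        = ∑ j, ∑ k, (B i j * B i k) * ((ω i)^2 * (ω j * ω k)) := by
      rw [sq, Finset.sum_mul_sum]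
      exact Finset.sum_congr rfl fun j _ => Finset.sum_congr rfl fun k _ => by ring
    rw [hmv ω, sub_sq, e1]
    ring
  have HS2 : Integrable (fun ω : Fin n → ℝ =>
      ∑ j, ∑ k, (B i j * B i k) * ((ω i)^2 * (ω j * ω k))) P :=
    integrable_finset_sum _ (fun j _ =>
      integrable_finset_sum _ (fun k _ => (Int2 j k).const_mul _))
  have sum2 : ∫ ω, (∑ j, ∑ k, (B i j * B i k) * ((ω i)^2 * (ω j * ω k))) ∂P
      = (∑ j, B i j ^ 2) + 2 * B i i ^ 2 := by
    rw [integral_finset_sum _ (fun j _ =>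
      integrable_finset_sum _ (fun k _ => (Int2 j k).const_mul _))]
    have : ∀ j : Fin n, ∫ ω, (∑ k, (B i j * B i k) * ((ω i)^2 * (ω j * ω k))) ∂P
        = B i j * B i j * (if j = i then 3 else 1) := by
      intro j
      rw [integral_finset_sum _ (fun k _ => (Int2 j k).const_mul _)]
      simp_rw [integral_const_mul, T2]
      simp [mul_ite, mul_one, mul_zero, Finset.sum_ite_eq']
    simp_rw [this]
    have e : ∀ j : Fin n, B i j * B i j * (if j = i then 3 else 1)
        = B i j ^ 2 + (if j = i then 2 * B i i ^ 2 else 0) := by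
      intro j
      rcases eq_or_ne j i with rfl | h
      · simp; ring
      · simp [h]; ring
    simp_rw [e]
    rw [Finset.sum_add_distrib, Finset.sum_ite_eq']
    simp
  have rest : Integrable (fun ω : Fin n → ℝ =>
      (∑ j, ∑ k, (B i j * B i k) * ((ω i)^2 * (ω j * ω k)))
        - 2 * B i i * (∑ j, B i j * (ω i * ω j))) P :=
    HS2.sub (HS1.const_mul _)
  simp_rw [hsq]
  rw [integral_add rest (integrable_const _), integral_sub HS2 (HS1.const_mul _),
    sum2, integral_const_mul, mean1, integral_const]
  simp
  ring
end

section
/- (Lemma 2.1) Let B ∈ ℝ^{n×n}, let i be an index with B_{ii} ≠ 0, and let EST^m be the generalized stochastic diagonal estimator built from m i.i.d. standard Gaussian query vectors. For any 0 < ε < 1 and 0 < δ < 1, if m ≥ (1/(ε² δ))·(1 + ‖[B]_{i,:}‖₂² / B_{ii}²), then P{ |(EST^m − diag(B))_i| ≤ ε·|B_{ii}| } ≥ 1 − δ. -/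
open MeasureTheory ProbabilityTheory
open Real Set
open scoped NNReal ENNReal

noncomputable section

namespace StmtAux3


lemma intI (k : ℕ) : Integrable (fun x : ℝ => x ^ k * Real.exp (-(1/2) * x ^ 2)) := by
  have := integrable_rpow_mul_exp_neg_mul_sq (b := 1/2) (by norm_num) (s := (k : ℝ))
    (by exact lt_of_lt_of_le (by norm_num) (Nat.cast_nonneg k))
  simpa [Real.rpow_natCast] using this

lemma I_odd (k : ℕ) (hk : Odd k) : ∫ x : ℝ, x ^ k * Real.exp (-(1/2) * x ^ 2) = 0 := by
  set f : ℝ → ℝ := fun x => x ^ k * Real.exp (-(1/2) * x ^ 2) with hf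
  have hneg : ∀ x, f (-x) = - f x := by
    intro x
    simp only [hf, neg_sq, Odd.neg_pow hk, neg_mul]
  have h1 : ∫ x, f (-x) = ∫ x, f x :=
    (Measure.measurePreserving_neg (volume : Measure ℝ)).integral_comp
      (Homeomorph.neg ℝ).measurableEmbedding f
  have h2 : ∫ x, f (-x) = - ∫ x, f x := by
    simp_rw [hneg]; exact integral_neg f
  linarith [h1.symm.trans h2]

lemma I_zero : ∫ x : ℝ, Real.exp (-(1/2) * x ^ 2) = √(2 * π) := by
  rw [integral_gaussian]
  rw [show π / (1/2) = 2 * π by ring]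

lemma sqrt_two_pi : √(2 * π) = √2 * √π := Real.sqrt_mul (by norm_num) π

lemma rpow_half_aux : ((1:ℝ)/2) ^ (-(3/2) : ℝ) = 2 * √2 ∧ ((1:ℝ)/2) ^ (-(5/2) : ℝ) = 4 * √2 := by
  have h2 : (0:ℝ) < 2 := by norm_num
  have ha : ∀ y : ℝ, ((1:ℝ)/2) ^ (-y : ℝ) = (2:ℝ) ^ (y : ℝ) := by
    intro y
    rw [one_div, Real.inv_rpow h2.le, Real.rpow_neg h2.le, inv_inv]
  have hs : √2 = (2:ℝ) ^ ((1:ℝ)/2) := by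
    rw [Real.sqrt_eq_rpow]
  constructor
  · rw [show (-(3/2) : ℝ) = -(3/2) by norm_num, ha (3/2),
      show (3/2 : ℝ) = 1 + 1/2 by norm_num, Real.rpow_add h2, Real.rpow_one, hs]
  · rw [show (-(5/2) : ℝ) = -(5/2) by norm_num, ha (5/2),
      show (5/2 : ℝ) = 2 + 1/2 by norm_num, Real.rpow_add h2, hs]
    norm_num [Real.rpow_two]

lemma I_two : ∫ x : ℝ, x ^ 2 * Real.exp (-(1/2) * x ^ 2) = √(2 * π) := by
  have habs : (fun x : ℝ => x ^ 2 * Real.exp (-(1/2) * x ^ 2))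
      = fun x => |x| ^ 2 * Real.exp (-(1/2) * |x| ^ 2) := by
    funext x; rw [sq_abs]
  rw [habs, integral_comp_abs (f := fun x => x ^ 2 * Real.exp (-(1/2) * x ^ 2))]
  have : ∫ x in Ioi (0:ℝ), x ^ 2 * Real.exp (-(1/2) * x ^ 2)
      = ∫ x in Ioi (0:ℝ), x ^ (2:ℝ) * Real.exp (-(1/2) * x ^ (2:ℝ)) := by
    simp_rw [Real.rpow_two]
  rw [this, integral_rpow_mul_exp_neg_mul_rpow (by norm_num) (by norm_num) (by norm_num)]
  have hg : Real.Gamma ((2 + 1) / 2) = √π / 2 := by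
    rw [show ((2:ℝ)+1)/2 = 1/2 + 1 by norm_num, Real.Gamma_add_one (by norm_num),
      Real.Gamma_one_half_eq]
    ring
  rw [hg, show (-((2:ℝ)+1)/2 : ℝ) = (-(3/2) : ℝ) by norm_num, rpow_half_aux.1, sqrt_two_pi]
  ring

lemma I_four : ∫ x : ℝ, x ^ 4 * Real.exp (-(1/2) * x ^ 2) = 3 * √(2 * π) := by
  have habs : (fun x : ℝ => x ^ 4 * Real.exp (-(1/2) * x ^ 2))
      = fun x => |x| ^ 4 * Real.exp (-(1/2) * |x| ^ 2) := by
    funext x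
    have h4 : |x| ^ 4 = x ^ 4 := by
      rw [← abs_pow]; exact abs_of_nonneg (by positivity)
    rw [sq_abs, h4]
  rw [habs, integral_comp_abs (f := fun x => x ^ 4 * Real.exp (-(1/2) * x ^ 2))]
  have : ∫ x in Ioi (0:ℝ), x ^ 4 * Real.exp (-(1/2) * x ^ 2)
      = ∫ x in Ioi (0:ℝ), x ^ (4:ℝ) * Real.exp (-(1/2) * x ^ (2:ℝ)) := by
    have h4 : ∀ x : ℝ, x ^ (4:ℝ) = x ^ (4:ℕ) := fun x => by
      rw [show (4:ℝ) = ((4:ℕ):ℝ) by norm_num, Real.rpow_natCast]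
    simp_rw [Real.rpow_two, h4]
  rw [this, integral_rpow_mul_exp_neg_mul_rpow (by norm_num) (by norm_num) (by norm_num)]
  have hg : Real.Gamma ((4 + 1) / 2) = 3 * √π / 4 := by
    rw [show ((4:ℝ)+1)/2 = (3/2) + 1 by norm_num, Real.Gamma_add_one (by norm_num),
      show (3/2 : ℝ) = 1/2 + 1 by norm_num, Real.Gamma_add_one (by norm_num),
      Real.Gamma_one_half_eq]
    ring
  rw [hg, show (-((4:ℝ)+1)/2 : ℝ) = (-(5/2) : ℝ) by norm_num, rpow_half_aux.2, sqrt_two_pi]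
  ring





lemma pdf_eq (x : ℝ) :
    gaussianPDFReal 0 1 x = (√(2*π))⁻¹ * Real.exp (-(1/2) * x ^ 2) := by
  simp only [gaussianPDFReal, NNReal.coe_one, mul_one, sub_zero]
  congr 1
  ring

lemma integral_G (f : ℝ → ℝ) :
    ∫ x, f x ∂(gaussianReal 0 1)
      = (√(2*π))⁻¹ * ∫ x, f x * Real.exp (-(1/2) * x ^ 2) := by
  rw [gaussianReal_of_var_ne_zero 0 one_ne_zero]
  have hpdf : gaussianPDF 0 1
      = fun x => ((Real.toNNReal (gaussianPDFReal 0 1 x) : ℝ≥0) : ℝ≥0∞) := rfl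
  have hm : Measurable (fun x : ℝ => Real.toNNReal (gaussianPDFReal 0 1 x)) :=
    measurable_real_toNNReal.comp (measurable_gaussianPDFReal 0 1)
  rw [hpdf, integral_withDensity_eq_integral_smul hm f]
  rw [← integral_const_mul]
  congr 1
  funext x
  rw [NNReal.smul_def, Real.coe_toNNReal _ (gaussianPDFReal_nonneg 0 1 x), pdf_eq x,
    smul_eq_mul]
  ring

lemma sqrt2pi_pos : (0:ℝ) < √(2*π) := Real.sqrt_pos.mpr (by positivity)

/-- `k`-th moment of the standard Gaussian. -/
noncomputable def Mo (k : ℕ) : ℝ := ∫ x, x ^ k ∂(gaussianReal 0 1)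

lemma Mo_eq (k : ℕ) : Mo k = (√(2*π))⁻¹ * ∫ x, x ^ k * Real.exp (-(1/2) * x ^ 2) :=
  integral_G (fun x => x ^ k)

lemma Mo_zero : Mo 0 = 1 := by
  rw [Mo_eq, show (fun x : ℝ => x ^ 0 * Real.exp (-(1/2) * x ^ 2))
    = fun x => Real.exp (-(1/2) * x ^ 2) from funext fun x => by simp] at *
  rw [I_zero, inv_mul_cancel₀ sqrt2pi_pos.ne']

lemma Mo_one : Mo 1 = 0 := by rw [Mo_eq, I_odd 1 (by norm_num), mul_zero]

lemma Mo_two : Mo 2 = 1 := by rw [Mo_eq, I_two, inv_mul_cancel₀ sqrt2pi_pos.ne']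

lemma Mo_three : Mo 3 = 0 := by rw [Mo_eq, I_odd 3 ⟨1, by norm_num⟩, mul_zero]

lemma Mo_four : Mo 4 = 3 := by
  rw [Mo_eq, I_four, ← mul_assoc, mul_comm ((√(2*π))⁻¹) 3, mul_assoc,
    inv_mul_cancel₀ sqrt2pi_pos.ne', mul_one]

lemma integrable_pow_G (k : ℕ) : Integrable (fun x : ℝ => x ^ k) (gaussianReal 0 1) := by
  rw [gaussianReal_of_var_ne_zero 0 one_ne_zero]
  have hpdf : gaussianPDF 0 1
      = fun x => ((Real.toNNReal (gaussianPDFReal 0 1 x) : ℝ≥0) : ℝ≥0∞) := rfl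
  have hm : Measurable (fun x : ℝ => Real.toNNReal (gaussianPDFReal 0 1 x)) :=
    measurable_real_toNNReal.comp (measurable_gaussianPDFReal 0 1)
  rw [hpdf, integrable_withDensity_iff_integrable_smul hm]
  have : (fun x : ℝ => (Real.toNNReal (gaussianPDFReal 0 1 x) : ℝ≥0) • (x ^ k))
      = fun x => (√(2*π))⁻¹ * (x ^ k * Real.exp (-(1/2) * x ^ 2)) := by
    funext x
    rw [NNReal.smul_def, Real.coe_toNNReal _ (gaussianPDFReal_nonneg 0 1 x), pdf_eq x,
      smul_eq_mul]
    ring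
  rw [this]
  exact (intI k).const_mul _



lemma Mo_def (k : ℕ) : Mo k = ∫ x, x ^ k ∂(gaussianReal 0 1) := rfl


section PiHelpers

variable {ι : Type*} [Fintype ι] {X : Type*} [MeasurableSpace X]
  (μ : Measure X) [SigmaFinite μ]

lemma integral_pi_prod (f : ι → X → ℝ) :
    ∫ x : ι → X, ∏ j, f j (x j) ∂(Measure.pi fun _ => μ) = ∏ j, ∫ x, f j x ∂μ := by
  letI : MeasureSpace X := ⟨μ⟩
  haveI : SigmaFinite (volume : Measure X) := ‹SigmaFinite μ›
  exact integral_fintype_prod_eq_prod f (μ := fun _ => μ)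

lemma integrable_pi_prod (f : ι → X → ℝ) (hf : ∀ j, Integrable (f j) μ) :
    Integrable (fun x : ι → X => ∏ j, f j (x j)) (Measure.pi fun _ => μ) := by
  letI : MeasureSpace X := ⟨μ⟩
  haveI : SigmaFinite (volume : Measure X) := ‹SigmaFinite μ›
  exact Integrable.fintype_prod hf

end PiHelpers

section NuLevel

variable {n : ℕ}

/-- product of `n` independent standard gaussians -/
def nu (n : ℕ) : Measure (Fin n → ℝ) := Measure.pi fun _ : Fin n => gaussianReal 0 1

instance (n : ℕ) : IsProbabilityMeasure (nu n) := by
  unfold nu; infer_instance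

lemma integral_monomial (e : Fin n → ℕ) :
    ∫ ω, (∏ j, (ω j) ^ (e j)) ∂(nu n) = ∏ j, Mo (e j) := by
  rw [nu]
  exact (integral_pi_prod (μ := gaussianReal 0 1) (fun j (t : ℝ) => t ^ (e j))).trans
    (Finset.prod_congr rfl fun j _ => (Mo_def (e j)).symm)

lemma integrable_monomial (e : Fin n → ℕ) :
    Integrable (fun ω : Fin n → ℝ => ∏ j, (ω j) ^ (e j)) (nu n) :=
  integrable_pi_prod _ _ fun j => integrable_pow_G (e j)

lemma prod_pow_single (ω : Fin n → ℝ) (j : Fin n) (k : ℕ) :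
    ∏ l, (ω l) ^ (if l = j then k else 0) = (ω j) ^ k := by
  have h : ∀ l, (ω l) ^ (if l = j then k else 0) = if l = j then (ω l) ^ k else 1 := by
    intro l; split <;> simp
  simp_rw [h]
  simp [Finset.prod_ite_eq']

lemma expand_pair (i j : Fin n) : (fun ω : Fin n → ℝ => ω i * ω j)
    = fun ω => ∏ l, (ω l) ^ ((if l = i then 1 else 0) + (if l = j then 1 else 0)) := by
  funext ω
  simp_rw [pow_add, Finset.prod_mul_distrib, prod_pow_single, pow_one]

lemma expand_quad (i j j' : Fin n) : (fun ω : Fin n → ℝ => ω i ^ 2 * (ω j * ω j'))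
    = fun ω => ∏ l, (ω l) ^ ((if l = i then 2 else 0)
        + ((if l = j then 1 else 0) + (if l = j' then 1 else 0))) := by
  funext ω
  simp_rw [pow_add, Finset.prod_mul_distrib, prod_pow_single, pow_one]

lemma integrable_pair (i j : Fin n) :
    Integrable (fun ω : Fin n → ℝ => ω i * ω j) (nu n) := by
  rw [expand_pair]; exact integrable_monomial _

lemma integrable_quad (i j j' : Fin n) :
    Integrable (fun ω : Fin n → ℝ => ω i ^ 2 * (ω j * ω j')) (nu n) := by
  rw [expand_quad]; exact integrable_monomial _

lemma prod_Mo_single (j : Fin n) (k : ℕ) :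
    ∏ l, Mo (if l = j then k else 0) = Mo k := by
  have h : ∀ l, Mo (if l = j then k else 0) = if l = j then Mo k else 1 := by
    intro l; split <;> simp [Mo_zero]
  simp_rw [h]
  simp [Finset.prod_ite_eq']

lemma prod_Mo_pair {i j : Fin n} (hij : i ≠ j) (a b : ℕ) :
    ∏ l, Mo (if l = i then a else if l = j then b else 0) = Mo a * Mo b := by
  have h : ∀ l, Mo (if l = i then a else if l = j then b else 0)
      = (if l = i then Mo a else 1) * (if l = j then Mo b else 1) := by
    intro l
    by_cases h1 : l = i
    · subst h1; simp [(by simpa using hij : ¬ l = j)]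
    · have hji' : ¬ j = i := fun h => hij h.symm
      by_cases h2 : l = j <;> simp [h1, h2, Mo_zero, hji']
  simp_rw [h, Finset.prod_mul_distrib]
  simp [Finset.prod_ite_eq']

lemma eval_pair (i j : Fin n) :
    ∫ ω, ω i * ω j ∂(nu n) = if j = i then 1 else 0 := by
  rw [expand_pair, integral_monomial]
  by_cases hji : j = i
  · subst hji
    simp only [if_pos rfl]
    have h : ∀ l : Fin n, ((if l = j then 1 else 0) + (if l = j then 1 else 0))
        = if l = j then 2 else 0 := fun l => by split <;> norm_num
    simp_rw [h, prod_Mo_single, Mo_two]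
    simp
  · rw [if_neg hji]
    refine Finset.prod_eq_zero (Finset.mem_univ j) ?_
    rw [if_neg (fun h => hji h), if_pos rfl, Mo_one]

lemma eval_quad (i j j' : Fin n) :
    ∫ ω, ω i ^ 2 * (ω j * ω j') ∂(nu n)
      = if j = j' then (if j = i then 3 else 1) else 0 := by
  rw [expand_quad, integral_monomial]
  by_cases hjj : j = j'
  · subst hjj
    rw [if_pos rfl]
    by_cases hji : j = i
    · subst hji
      rw [if_pos rfl]
      have h : ∀ l : Fin n, ((if l = j then 2 else 0)
          + ((if l = j then 1 else 0) + (if l = j then 1 else 0)))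
          = if l = j then 4 else 0 := fun l => by split <;> norm_num
      simp_rw [h, prod_Mo_single, Mo_four]
    · rw [if_neg hji]
      have hij : i ≠ j := fun h => hji h.symm
      have h : ∀ l : Fin n, ((if l = i then 2 else 0)
          + ((if l = j then 1 else 0) + (if l = j then 1 else 0)))
          = if l = i then 2 else if l = j then 2 else 0 := by
        intro l
        by_cases h1 : l = i
        · subst h1; simp [(by simpa using hij : ¬ l = j)]
        · by_cases h2 : l = j <;> simp [h1, h2, hji]
      simp_rw [h, prod_Mo_pair hij, Mo_two, mul_one]
  · rw [if_neg hjj]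
    by_cases hji : j = i
    · subst hji
      have hj'i : j' ≠ j := fun h => hjj h.symm
      refine Finset.prod_eq_zero (Finset.mem_univ j') ?_
      rw [if_neg hj'i, if_neg hj'i, if_pos rfl, Mo_one]
    · refine Finset.prod_eq_zero (Finset.mem_univ j) ?_
      rw [if_neg hji, if_pos rfl, if_neg (fun h => hjj h), Mo_one]
  
end NuLevel




section GLevel

variable {n : ℕ} (B : Matrix (Fin n) (Fin n) ℝ) (i : Fin n)

def gfun : (Fin n → ℝ) → ℝ := fun ω => (∑ j, B i j * (ω i * ω j)) - B i i

lemma integrable_S :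
    Integrable (fun ω : Fin n → ℝ => ∑ j, B i j * (ω i * ω j)) (nu n) :=
  integrable_finset_sum _ fun j _ => (integrable_pair i j).const_mul _

lemma integral_S : ∫ ω, (∑ j, B i j * (ω i * ω j)) ∂(nu n) = B i i := by
  rw [integral_finset_sum _ fun j _ => (integrable_pair i j).const_mul _]
  have h : ∀ j, ∫ ω, B i j * (ω i * ω j) ∂(nu n) = B i j * (if j = i then 1 else 0) := by
    intro j
    rw [integral_const_mul, eval_pair]
  simp_rw [h, mul_ite, mul_one, mul_zero]
  simp

lemma integrable_g : Integrable (gfun B i) (nu n) :=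
  (integrable_S B i).sub (integrable_const _)

lemma integral_g : ∫ ω, gfun B i ω ∂(nu n) = 0 := by
  have : (fun ω => gfun B i ω) = fun ω : Fin n → ℝ => (∑ j, B i j * (ω i * ω j)) - B i i := rfl
  rw [this, integral_sub (integrable_S B i) (integrable_const _), integral_S, integral_const]
  simp

lemma g_sq_eq : (fun ω => gfun B i ω ^ 2)
    = fun ω : Fin n → ℝ => (∑ j, ∑ j', (B i j * B i j') * (ω i ^ 2 * (ω j * ω j')))
        - 2 * B i i * (∑ j, B i j * (ω i * ω j)) + B i i ^ 2 := by
  funext ω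
  have h1 : gfun B i ω ^ 2
      = (∑ j, B i j * (ω i * ω j)) * (∑ j', B i j' * (ω i * ω j'))
        - 2 * B i i * (∑ j, B i j * (ω i * ω j)) + B i i ^ 2 := by
    rw [gfun]; ring
  rw [h1, Finset.sum_mul_sum]
  have h2 : ∀ j j', B i j * (ω i * ω j) * (B i j' * (ω i * ω j'))
      = (B i j * B i j') * (ω i ^ 2 * (ω j * ω j')) := fun j j' => by ring
  simp_rw [h2]

lemma integrable_g_sq : Integrable (fun ω => gfun B i ω ^ 2) (nu n) := by
  rw [g_sq_eq]
  refine Integrable.add (Integrable.sub ?_ ?_) (integrable_const _)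
  · exact integrable_finset_sum _ fun j _ =>
      integrable_finset_sum _ fun j' _ => (integrable_quad i j j').const_mul _
  · exact (integrable_S B i).const_mul _

lemma integral_g_sq : ∫ ω, gfun B i ω ^ 2 ∂(nu n) = B i i ^ 2 + ∑ j, B i j ^ 2 := by
  have hquad : Integrable (fun ω : Fin n → ℝ =>
      ∑ j, ∑ j', (B i j * B i j') * (ω i ^ 2 * (ω j * ω j'))) (nu n) :=
    integrable_finset_sum _ fun j _ =>
      integrable_finset_sum _ fun j' _ => (integrable_quad i j j').const_mul _
  have hmid : Integrable (fun ω : Fin n → ℝ =>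
      2 * B i i * ∑ j, B i j * (ω i * ω j)) (nu n) := (integrable_S B i).const_mul _
  have hsub : Integrable (fun ω : Fin n → ℝ =>
      (∑ j, ∑ j', (B i j * B i j') * (ω i ^ 2 * (ω j * ω j')))
        - 2 * B i i * (∑ j, B i j * (ω i * ω j))) (nu n) := hquad.sub hmid
  rw [g_sq_eq, integral_add hsub (integrable_const _), integral_sub hquad hmid,
    integral_finset_sum _ (fun j _ =>
      integrable_finset_sum _ fun j' _ => (integrable_quad i j j').const_mul _),
    integral_const_mul, integral_S, integral_const]
  have hrow : ∀ j, ∫ ω, (∑ j', (B i j * B i j') * (ω i ^ 2 * (ω j * ω j'))) ∂(nu n)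
      = (B i j)^2 * (if j = i then 3 else 1) := by
    intro j
    rw [integral_finset_sum _ fun j' _ => (integrable_quad i j j').const_mul _]
    have h : ∀ j', ∫ ω, (B i j * B i j') * (ω i ^ 2 * (ω j * ω j')) ∂(nu n)
        = if j = j' then (B i j * B i j') * (if j = i then 3 else 1) else 0 := by
      intro j'
      rw [integral_const_mul, eval_quad]
      split
      · rfl
      · rw [mul_zero]
    simp_rw [h]
    rw [Finset.sum_ite_eq Finset.univ j
      (fun j' => (B i j * B i j') * (if j = i then 3 else 1))]
    simp [pow_two]
  simp_rw [hrow]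
  have hsum : ∑ j, (B i j)^2 * (if j = i then 3 else 1)
      = (∑ j, B i j ^ 2) + 2 * B i i ^ 2 := by
    have h : ∀ j, (B i j)^2 * (if j = i then 3 else 1)
        = B i j ^ 2 + (if j = i then 2 * B i j ^ 2 else 0) := by
      intro j; split <;> ring
    simp_rw [h, Finset.sum_add_distrib]
    rw [Finset.sum_ite_eq' Finset.univ i (fun j => 2 * B i j ^ 2)]
    simp
  rw [hsum]
  simp only [measure_univ, probReal_univ, ENNReal.toReal_one, smul_eq_mul, one_mul, mul_one]
  ring

end GLevel



section PLevel

variable {n m : ℕ} (B : Matrix (Fin n) (Fin n) ℝ) (i : Fin n)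

def Pm (n m : ℕ) : Measure (Fin m → Fin n → ℝ) := Measure.pi fun _ : Fin m => nu n

instance (n m : ℕ) : IsProbabilityMeasure (Pm n m) := by unfold Pm; infer_instance

lemma prod_F_single {m : ℕ} (F : ℕ → ℝ) (hF : F 0 = 1) (j : Fin m) (k : ℕ) :
    ∏ l, F (if l = j then k else 0) = F k := by
  have h : ∀ l, F (if l = j then k else 0) = if l = j then F k else 1 := by
    intro l; split <;> simp [hF]
  simp_rw [h]
  simp [Finset.prod_ite_eq']

lemma integrable_gpow (q : ℕ) (hq : q ≤ 2) :
    Integrable (fun ω => gfun B i ω ^ q) (nu n) := by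
  interval_cases q
  · simpa using integrable_const (μ := nu n) (1 : ℝ)
  · simpa [pow_one] using integrable_g B i
  · exact integrable_g_sq B i

lemma eval_gpow (q : ℕ) :
    ∫ ω, gfun B i ω ^ q ∂(nu n)
      = if q = 0 then 1 else if q = 1 then 0 else if q = 2 then B i i ^ 2 + ∑ j, B i j ^ 2
        else ∫ ω, gfun B i ω ^ q ∂(nu n) := by
  rcases Nat.lt_or_ge q 3 with h | h
  · interval_cases q
    · simp
    · simpa [pow_one] using integral_g B i
    · simpa using integral_g_sq B i
  · have h0 : q ≠ 0 := by omega
    have h1 : q ≠ 1 := by omega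
    have h2 : q ≠ 2 := by omega
    simp [h0, h1, h2]

lemma expand_gpair (k l : Fin m) :
    (fun x : Fin m → Fin n → ℝ => gfun B i (x k) * gfun B i (x l))
      = fun x => ∏ k', (gfun B i (x k'))
          ^ ((if k' = k then 1 else 0) + (if k' = l then 1 else 0)) := by
  funext x
  simpa using congrFun (expand_pair (n := m) k l) (fun k' => gfun B i (x k'))

lemma integrable_gpair (k l : Fin m) :
    Integrable (fun x : Fin m → Fin n → ℝ => gfun B i (x k) * gfun B i (x l)) (Pm n m) := by
  rw [expand_gpair, Pm]
  exact integrable_pi_prod (μ := nu n)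
    (fun k' ω => gfun B i ω ^ ((if k' = k then 1 else 0) + (if k' = l then 1 else 0)))
    (fun k' => integrable_gpow B i _ (by split <;> split <;> norm_num))

lemma eval_gpair (k l : Fin m) :
    ∫ x, gfun B i (x k) * gfun B i (x l) ∂(Pm n m)
      = if l = k then B i i ^ 2 + ∑ j, B i j ^ 2 else 0 := by
  rw [expand_gpair, Pm]
  rw [integral_pi_prod (μ := nu n)
    (fun k' ω => gfun B i ω ^ ((if k' = k then 1 else 0) + (if k' = l then 1 else 0)))]
  by_cases hlk : l = k
  · subst hlk
    rw [if_pos rfl]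
    have h : ∀ k' : Fin m, ((if k' = l then 1 else 0) + (if k' = l then 1 else 0))
        = if k' = l then 2 else 0 := fun k' => by split <;> norm_num
    simp_rw [h]
    calc ∏ k', ∫ ω, gfun B i ω ^ (if k' = l then 2 else 0) ∂(nu n)
        = ∫ ω, gfun B i ω ^ 2 ∂(nu n) := by
          refine prod_F_single (fun q => ∫ ω, gfun B i ω ^ q ∂(nu n)) ?_ l 2
          simp
      _ = B i i ^ 2 + ∑ j, B i j ^ 2 := integral_g_sq B i
  · rw [if_neg hlk]
    refine Finset.prod_eq_zero (Finset.mem_univ k) ?_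
    rw [if_pos rfl, if_neg (fun h => hlk h.symm)]
    simpa [pow_one] using integral_g B i

lemma sq_sum_expand (x : Fin m → Fin n → ℝ) :
    (∑ k, gfun B i (x k)) ^ 2 = ∑ k, ∑ l, gfun B i (x k) * gfun B i (x l) := by
  rw [sq, Finset.sum_mul_sum]

lemma integrable_sq_sum :
    Integrable (fun x : Fin m → Fin n → ℝ => (∑ k, gfun B i (x k)) ^ 2) (Pm n m) := by
  simp_rw [sq_sum_expand]
  exact integrable_finset_sum _ fun k _ =>
    integrable_finset_sum _ fun l _ => integrable_gpair B i k l

lemma integral_sq_sum :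
    ∫ x, (∑ k, gfun B i (x k)) ^ 2 ∂(Pm n m)
      = m * (B i i ^ 2 + ∑ j, B i j ^ 2) := by
  simp_rw [sq_sum_expand]
  rw [integral_finset_sum _ fun k _ =>
    integrable_finset_sum _ fun l _ => integrable_gpair B i k l]
  have h : ∀ k : Fin m, ∫ x, (∑ l, gfun B i (x k) * gfun B i (x l)) ∂(Pm n m)
      = B i i ^ 2 + ∑ j, B i j ^ 2 := by
    intro k
    rw [integral_finset_sum _ fun l _ => integrable_gpair B i k l]
    simp_rw [eval_gpair B i k]
    rw [Finset.sum_ite_eq' Finset.univ k (fun _ => B i i ^ 2 + ∑ j, B i j ^ 2)]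
    simp
  simp_rw [h, Finset.sum_const, Finset.card_univ, Fintype.card_fin, nsmul_eq_mul]

end PLevel



end StmtAux3

end

open StmtAux3

/-- Lemma 2.1: if
`m ≥ (1/(ε²δ))(1 + ‖[B]_{i,:}‖₂²/B_{ii}²)` then the generalized stochastic diagonal
estimator `EST^m := (1/m) Σ_k ω^{(k)} ⊙ (B ω^{(k)})` satisfies
`P{|(EST^m − diag B)_i| ≤ ε|B_{ii}|} ≥ 1 − δ`. -/
theorem stmt_3 (n m : ℕ) (B : Matrix (Fin n) (Fin n) ℝ) (i : Fin n)
    (hB : B i i ≠ 0) (ε δ : ℝ) (hε0 : 0 < ε) (hε1 : ε < 1) (hδ0 : 0 < δ) (hδ1 : δ < 1)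
    (hm : (1 / (ε ^ 2 * δ)) * (1 + (∑ j, B i j ^ 2) / B i i ^ 2) ≤ (m : ℝ))
    (P : Measure (Fin m → Fin n → ℝ))
    (hP : P = Measure.pi fun _ : Fin m => Measure.pi fun _ : Fin n => gaussianReal 0 1) :
    ENNReal.ofReal (1 - δ)
      ≤ P {x | |(1 / (m : ℝ)) * (∑ k, x k i * B.mulVec (x k) i) - B i i| ≤ ε * |B i i|} := by
  have hPeq : P = Pm n m := hP
  subst hPeq
  clear hP
  set S : ℝ := ∑ j, B i j ^ 2 with hS_def
  set c : ℝ := B i i ^ 2 with hc_def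
  have hc : 0 < c := by positivity
  have hS : 0 ≤ S := Finset.sum_nonneg fun j _ => sq_nonneg _
  have hm0 : (0:ℝ) < m := by
    refine lt_of_lt_of_le ?_ hm
    have : (0:ℝ) ≤ S / c := by positivity
    have h1 : (0:ℝ) < 1 / (ε^2 * δ) := by positivity
    nlinarith
  -- rewrite the deviation
  have hfun : ∀ x : Fin m → Fin n → ℝ,
      (1/(m:ℝ)) * (∑ k, x k i * B.mulVec (x k) i) - B i i
        = (1/(m:ℝ)) * ∑ k, gfun B i (x k) := by
    intro x
    have h1 : ∀ k, x k i * B.mulVec (x k) i = gfun B i (x k) + B i i := by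
      intro k
      simp only [Matrix.mulVec, dotProduct, gfun, sub_add_cancel]
      rw [Finset.mul_sum]
      exact Finset.sum_congr rfl fun j _ => by ring
    simp_rw [h1, Finset.sum_add_distrib, Finset.sum_const, Finset.card_univ,
      Fintype.card_fin, nsmul_eq_mul]
    field_simp
    ring
  -- measurability of the event
  have hmeasfun : Measurable (fun x : Fin m → Fin n → ℝ =>
      (1/(m:ℝ)) * (∑ k, x k i * B.mulVec (x k) i) - B i i) := by
    apply Measurable.sub ?_ measurable_const
    apply Measurable.const_mul
    apply Finset.measurable_sum _ (fun k _ => ?_)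
    have h1 : Measurable fun x : Fin m → Fin n → ℝ => x k i :=
      (measurable_pi_apply i).comp (measurable_pi_apply k)
    have h2 : Measurable fun x : Fin m → Fin n → ℝ => B.mulVec (x k) i := by
      simp only [Matrix.mulVec, dotProduct]
      refine Finset.measurable_sum _ fun j _ => ?_
      exact Measurable.const_mul
        (show Measurable fun x : Fin m → Fin n → ℝ => x k j from
          (measurable_pi_apply j).comp (measurable_pi_apply k)) _
    exact h1.mul h2
  set A : Set (Fin m → Fin n → ℝ) :=
    {x | |(1/(m:ℝ)) * (∑ k, x k i * B.mulVec (x k) i) - B i i| ≤ ε * |B i i|} with hA_def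
  have hmeasA : MeasurableSet A := measurableSet_le hmeasfun.abs measurable_const
  -- Markov
  set f : (Fin m → Fin n → ℝ) → ℝ := fun x => ((1/(m:ℝ)) * ∑ k, gfun B i (x k))^2 with hf_def
  have hf_eq : f = fun x => (1/(m:ℝ))^2 * (∑ k, gfun B i (x k))^2 := by
    funext x; rw [hf_def]; ring
  have hf_int : Integrable f (Pm n m) := by
    rw [hf_eq]; exact (integrable_sq_sum B i).const_mul _
  have hf_val : ∫ x, f x ∂(Pm n m) = (c + S) / m := by
    rw [hf_eq, integral_const_mul, integral_sq_sum B i]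
    field_simp
    ring
  set a : ℝ := ε * |B i i| with ha_def
  have ha : 0 < a := by
    rw [ha_def]
    exact mul_pos hε0 (abs_pos.mpr hB)
  have hmarkov := mul_meas_ge_le_integral_of_nonneg
    (ae_of_all (Pm n m) fun x => sq_nonneg _) hf_int (a^2)
  rw [hf_val] at hmarkov
  -- complement subset
  have hsub : Aᶜ ⊆ {x | a^2 ≤ f x} := by
    intro x hx
    rw [hA_def] at hx
    simp only [mem_compl_iff, mem_setOf_eq, not_le] at hx
    rw [hfun x] at hx
    have : a ≤ |(1/(m:ℝ)) * ∑ k, gfun B i (x k)| := le_of_lt hx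
    have h2 := pow_le_pow_left₀ ha.le this 2
    rwa [sq_abs] at h2
  -- numeric bound
  have htR : ((Pm n m) {x | a^2 ≤ f x}).toReal ≤ δ := by
    set t : ℝ := ((Pm n m) {x | a^2 ≤ f x}).toReal with ht_def
    have ht0 : 0 ≤ t := ENNReal.toReal_nonneg
    have ha2 : a^2 = ε^2 * c := by rw [ha_def, hc_def, mul_pow, sq_abs]
    have hVb : c + S ≤ (m:ℝ) * (ε^2 * δ) * c := by
      have h1 : (1 + S/c) ≤ (m:ℝ) * (ε^2 * δ) := by
        rw [one_div, inv_mul_eq_div, div_le_iff₀ (by positivity : (0:ℝ) < ε^2*δ)] at hm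
        linarith
      have h2 := mul_le_mul_of_nonneg_right h1 hc.le
      calc c + S = (1 + S/c) * c := by field_simp
        _ ≤ (m:ℝ) * (ε^2 * δ) * c := h2
    have h3 : (c + S)/m ≤ ε^2 * δ * c := by
      rw [div_le_iff₀ hm0]
      nlinarith
    have h4 : ε^2 * c * t ≤ ε^2 * c * δ := by
      rw [ha2] at hmarkov
      have hmk : ε^2 * c * t ≤ (c + S) / m := by rw [ht_def, ha2]; exact hmarkov
      nlinarith
    exact le_of_mul_le_mul_left h4 (by positivity)
  have hbad : (Pm n m) {x | a^2 ≤ f x} ≤ ENNReal.ofReal δ := by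
    rw [ENNReal.le_ofReal_iff_toReal_le (measure_ne_top _ _) hδ0.le]
    exact htR
  have hcompl : (Pm n m) Aᶜ ≤ ENNReal.ofReal δ := le_trans (measure_mono hsub) hbad
  have hsum := prob_add_prob_compl (μ := Pm n m) hmeasA
  have h1le : (1:ℝ≥0∞) ≤ (Pm n m) A + ENNReal.ofReal δ := by
    rw [← hsum]
    exact add_le_add le_rfl hcompl
  have : ENNReal.ofReal (1 - δ) = 1 - ENNReal.ofReal δ := by
    rw [ENNReal.ofReal_sub 1 hδ0.le, ENNReal.ofReal_one]
  rw [this]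
  exact tsub_le_iff_right.mpr h1le
end

section
/- (Lemma 2.3, expectation form) Let n ≥ 2, let B ∈ ℝ^{n×n}, and let EST^m be the generalized stochastic diagonal estimator built from m i.i.d. standard Gaussian query vectors. If 8·e·log(n) ≤ m ≤ n, then E[ ‖EST^m − diag(B)‖₂² ] ≤ (64·n·(e·log(n))³ / m) · ‖B‖_∞², where ‖B‖_∞ := max_{1≤i≤n} ‖[B]_{i,:}‖₁ is the maximum row ℓ¹ norm of B. -/
open MeasureTheory ProbabilityTheory Finset Filter Real
set_option linter.unusedSectionVars false

section PiHelpers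
variable {E : Type*} [MeasurableSpace E] {ι : Type*} [Fintype ι] [DecidableEq ι]

lemma pi_integral_prod (μ : Measure E) [SigmaFinite μ] (f : ι → E → ℝ) :
    ∫ x : ι → E, ∏ i, f i (x i) ∂(Measure.pi fun _ => μ) = ∏ i, ∫ t, f i t ∂μ := by
  letI : MeasureSpace E := MeasureSpace.mk μ
  haveI : SigmaFinite (volume : Measure E) := ‹SigmaFinite μ›
  exact MeasureTheory.integral_fintype_prod_eq_prod f (μ := fun _ => μ)

lemma pi_integrable_prod (μ : Measure E) [SigmaFinite μ] (f : ι → E → ℝ)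
    (hf : ∀ i, Integrable (f i) μ) :
    Integrable (fun x : ι → E => ∏ i, f i (x i)) (Measure.pi fun _ => μ) := by
  letI : MeasureSpace E := MeasureSpace.mk μ
  haveI : SigmaFinite (volume : Measure E) := ‹SigmaFinite μ›
  exact MeasureTheory.Integrable.fintype_prod hf

lemma prod_eq_two {F : ι → ℝ} {k l : ι} (hkl : k ≠ l) (h : ∀ i, i ≠ k → i ≠ l → F i = 1) :
    ∏ i, F i = F k * F l := by
  rw [← Finset.mul_prod_erase univ F (mem_univ k),
    ← Finset.mul_prod_erase _ F (Finset.mem_erase.2 ⟨hkl.symm, mem_univ l⟩),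
    Finset.prod_eq_one, mul_one]
  intro i hi
  simp only [Finset.mem_erase] at hi
  exact h i hi.2.1 hi.1

lemma prod_eq_three {F : ι → ℝ} {k l r : ι} (hkl : k ≠ l) (hkr : k ≠ r) (hlr : l ≠ r)
    (h : ∀ i, i ≠ k → i ≠ l → i ≠ r → F i = 1) :
    ∏ i, F i = F k * (F l * F r) := by
  rw [← Finset.mul_prod_erase univ F (mem_univ k),
    ← Finset.mul_prod_erase _ F (Finset.mem_erase.2 ⟨hkl.symm, mem_univ l⟩),
    ← Finset.mul_prod_erase _ F
      (Finset.mem_erase.2 ⟨hlr.symm, Finset.mem_erase.2 ⟨hkr.symm, mem_univ r⟩⟩),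
    Finset.prod_eq_one, mul_one]
  intro i hi
  simp only [Finset.mem_erase] at hi
  exact h i hi.2.2.1 hi.2.1 hi.1

lemma pi_integral_eval (μ : Measure E) [IsProbabilityMeasure μ] (f : E → ℝ) (k : ι) :
    ∫ x : ι → E, f (x k) ∂(Measure.pi fun _ => μ) = ∫ t, f t ∂μ := by
  have h1 : (fun x : ι → E => f (x k))
      = fun x => ∏ i, (fun (i : ι) (t : E) => if i = k then f t else 1) i (x i) := by
    funext x
    rw [Finset.prod_ite_eq' univ k (fun i => f (x i))]
    simp
  rw [h1, pi_integral_prod μ (fun (i : ι) (t : E) => if i = k then f t else 1)]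
  have h2 : ∀ i : ι, (∫ t, (if i = k then f t else 1) ∂μ) = if i = k then ∫ t, f t ∂μ else 1 := by
    intro i; split_ifs <;> simp
  rw [Finset.prod_congr rfl fun i _ => h2 i, Finset.prod_ite_eq' univ k fun _ => ∫ t, f t ∂μ]
  simp

lemma pi_integrable_eval (μ : Measure E) [IsProbabilityMeasure μ] (f : E → ℝ)
    (hf : Integrable f μ) (k : ι) :
    Integrable (fun x : ι → E => f (x k)) (Measure.pi fun _ => μ) := by
  have h1 : (fun x : ι → E => f (x k))
      = fun x => ∏ i, (fun (i : ι) (t : E) => if i = k then f t else 1) i (x i) := by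
    funext x
    rw [Finset.prod_ite_eq' univ k (fun i => f (x i))]
    simp
  rw [h1]
  refine pi_integrable_prod μ (fun (i : ι) (t : E) => if i = k then f t else 1) fun i => ?_
  by_cases h : i = k
  · simpa [h] using hf
  · simp only [if_neg h]; exact integrable_const 1

lemma pi_integral_eval_two (μ : Measure E) [IsProbabilityMeasure μ] (f g : E → ℝ)
    {k l : ι} (hkl : k ≠ l) :
    ∫ x : ι → E, f (x k) * g (x l) ∂(Measure.pi fun _ => μ)
      = (∫ t, f t ∂μ) * ∫ t, g t ∂μ := by
  have h1 : (fun x : ι → E => f (x k) * g (x l))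
      = fun x => ∏ i, (fun (i : ι) (t : E) =>
          if i = k then f t else if i = l then g t else 1) i (x i) := by
    funext x
    rw [prod_eq_two hkl (fun i hik hil => by simp [hik, hil])]
    simp [if_neg (Ne.symm hkl)]
  rw [h1, pi_integral_prod μ (fun (i : ι) (t : E) =>
      if i = k then f t else if i = l then g t else 1),
    prod_eq_two hkl (fun i hik hil => by simp [hik, hil])]
  simp [if_neg (Ne.symm hkl)]

lemma pi_integrable_eval_two (μ : Measure E) [IsProbabilityMeasure μ] (f g : E → ℝ)
    (hf : Integrable f μ) (hg : Integrable g μ) {k l : ι} (hkl : k ≠ l) :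
    Integrable (fun x : ι → E => f (x k) * g (x l)) (Measure.pi fun _ => μ) := by
  have h1 : (fun x : ι → E => f (x k) * g (x l))
      = fun x => ∏ i, (fun (i : ι) (t : E) =>
          if i = k then f t else if i = l then g t else 1) i (x i) := by
    funext x
    rw [prod_eq_two hkl (fun i hik hil => by simp [hik, hil])]
    simp [if_neg (Ne.symm hkl)]
  rw [h1]
  refine pi_integrable_prod μ (fun (i : ι) (t : E) =>
      if i = k then f t else if i = l then g t else 1) fun i => ?_
  by_cases h : i = k
  · simpa [h] using hf
  · by_cases h' : i = l
    · simpa [h', if_neg (Ne.symm hkl)] using hg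
    · simp only [if_neg h, if_neg h']; exact integrable_const 1

lemma pi_integral_eval_three (μ : Measure E) [IsProbabilityMeasure μ] (f g h : E → ℝ)
    {k l r : ι} (hkl : k ≠ l) (hkr : k ≠ r) (hlr : l ≠ r) :
    ∫ x : ι → E, f (x k) * (g (x l) * h (x r)) ∂(Measure.pi fun _ => μ)
      = (∫ t, f t ∂μ) * ((∫ t, g t ∂μ) * ∫ t, h t ∂μ) := by
  have h1 : (fun x : ι → E => f (x k) * (g (x l) * h (x r)))
      = fun x => ∏ i, (fun (i : ι) (t : E) => if i = k then f t else if i = l then g t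
          else if i = r then h t else 1) i (x i) := by
    funext x
    rw [prod_eq_three hkl hkr hlr (fun i h1 h2 h3 => by simp [h1, h2, h3])]
    simp [if_neg (Ne.symm hkl), if_neg (Ne.symm hkr), if_neg (Ne.symm hlr)]
  rw [h1, pi_integral_prod μ (fun (i : ι) (t : E) => if i = k then f t else if i = l then g t
      else if i = r then h t else 1),
    prod_eq_three hkl hkr hlr (fun i h1 h2 h3 => by simp [h1, h2, h3])]
  simp [if_neg (Ne.symm hkl), if_neg (Ne.symm hkr), if_neg (Ne.symm hlr)]

end PiHelpers

noncomputable def gaussE (t : ℝ) : ℝ := Real.exp (-(1/2) * t ^ 2)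

lemma gaussE_pdf (t : ℝ) :
    gaussianPDFReal 0 1 t = (Real.sqrt (2 * π))⁻¹ * gaussE t := by
  simp only [gaussianPDFReal, gaussE]
  norm_num
  left
  ring_nf

lemma gaussE_integrable (k : ℕ) : Integrable (fun t : ℝ => t ^ k * gaussE t) := by
  have := integrable_rpow_mul_exp_neg_mul_sq (b := 1/2) one_half_pos (s := (k : ℝ))
    (by exact_mod_cast neg_one_lt_zero.trans_le (Nat.cast_nonneg k))
  simpa [gaussE, Real.rpow_natCast] using this

lemma gaussE_tendsto_atTop (k : ℕ) :
    Tendsto (fun t : ℝ => t ^ k * gaussE t) atTop (nhds 0) := by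
  have hexp : Tendsto (fun x : ℝ => Real.exp (-(1/2) * x)) atTop (nhds 0) := by
    have h1 : Tendsto (fun x : ℝ => -(1/2) * x) atTop atBot := by
      apply Filter.tendsto_id.const_mul_atTop_of_neg
      norm_num
    exact Real.tendsto_exp_atBot.comp h1
  have h := (rpow_mul_exp_neg_mul_sq_isLittleO_exp_neg one_half_pos
      (k : ℝ)).isBigO.trans_tendsto hexp
  have heq : (fun x : ℝ => x ^ (k : ℝ) * Real.exp (-(1/2) * x ^ 2))
      = fun t => t ^ k * gaussE t := by
    funext t; rw [Real.rpow_natCast]; rfl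
  rwa [heq] at h

lemma gaussE_tendsto_atBot (k : ℕ) :
    Tendsto (fun t : ℝ => t ^ k * gaussE t) atBot (nhds 0) := by
  have h := ((gaussE_tendsto_atTop k).comp tendsto_neg_atBot_atTop).const_mul ((-1 : ℝ) ^ k)
  rw [mul_zero] at h
  refine h.congr fun t => ?_
  show (-1:ℝ)^k * ((-t)^k * gaussE (-t)) = t^k * gaussE t
  have h1 : gaussE (-t) = gaussE t := by simp [gaussE]
  rw [h1, ← mul_assoc, ← mul_pow, neg_one_mul, neg_neg]

lemma gaussE_hasDerivAt (t : ℝ) : HasDerivAt gaussE (-t * gaussE t) t := by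
  have h1 : HasDerivAt (fun t : ℝ => -(1/2) * t ^ 2) (-t) t := by
    have := (hasDerivAt_pow 2 t).const_mul (-(1/2) : ℝ)
    refine this.congr_deriv ?_
    push_cast
    ring
  have := h1.exp
  refine this.congr_deriv ?_
  simp [gaussE]
  ring

lemma gaussJ (p q : ℝ → ℝ) (hd : ∀ t, HasDerivAt p (q t) t)
    (hI : Integrable (fun t => (q t - t * p t) * gaussE t))
    (hT : Tendsto (fun t => p t * gaussE t) atTop (nhds 0))
    (hB : Tendsto (fun t => p t * gaussE t) atBot (nhds 0)) :
    ∫ t : ℝ, (q t - t * p t) * gaussE t = 0 := by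
  have hderiv : ∀ t : ℝ, HasDerivAt (fun t => p t * gaussE t)
      ((q t - t * p t) * gaussE t) t := by
    intro t
    have := (hd t).mul (gaussE_hasDerivAt t)
    refine this.congr_deriv ?_
    ring
  have := integral_of_hasDerivAt_of_tendsto hderiv hI hB hT
  simpa using this

lemma gaussE_J1 : ∫ t : ℝ, t * gaussE t = 0 := by
  have h := gaussJ (fun _ => -1) (fun _ => 0) (fun t => (hasDerivAt_const t (-1:ℝ)))
    (by apply Integrable.congr (gaussE_integrable 1); filter_upwards with t; ring)
    (by
      have := (gaussE_tendsto_atTop 0).neg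
      rw [neg_zero] at this
      exact this.congr fun t => by simp)
    (by
      have := (gaussE_tendsto_atBot 0).neg
      rw [neg_zero] at this
      exact this.congr fun t => by simp)
  have heq : (fun t : ℝ => (0 - t * (-1)) * gaussE t) = fun t => t * gaussE t := by
    funext t; ring
  rwa [heq] at h

lemma gaussE_J2 : ∫ t : ℝ, (t ^ 2 - 1) * gaussE t = 0 := by
  have h := gaussJ (fun t => -t) (fun _ => -1) (fun t => (hasDerivAt_id t).neg)
    (by
      apply Integrable.congr ((gaussE_integrable 2).sub (gaussE_integrable 0))
      filter_upwards with t
      simp only [Pi.sub_apply]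
      ring)
    (by
      have := (gaussE_tendsto_atTop 1).neg
      rw [neg_zero] at this
      exact this.congr fun t => by simp)
    (by
      have := (gaussE_tendsto_atBot 1).neg
      rw [neg_zero] at this
      exact this.congr fun t => by simp)
  have heq : (fun t : ℝ => (-1 - t * (-t)) * gaussE t) = fun t => (t^2 - 1) * (gaussE t) := by
    funext t; ring
  rwa [heq] at h

lemma gaussE_J3 : ∫ t : ℝ, t ^ 3 * gaussE t = 0 := by
  have h := gaussJ (fun t => -(t^2 + 2)) (fun t => -(2*t))
    (fun t => by
      have := (((hasDerivAt_pow 2 t).add_const 2)).neg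
      refine this.congr_deriv ?_
      push_cast
      ring)
    (by
      apply Integrable.congr (gaussE_integrable 3)
      filter_upwards with t; ring)
    (by
      have := ((gaussE_tendsto_atTop 2).add ((gaussE_tendsto_atTop 0).const_mul 2)).neg
      norm_num at this
      exact this.congr fun t => by ring)
    (by
      have := ((gaussE_tendsto_atBot 2).add ((gaussE_tendsto_atBot 0).const_mul 2)).neg
      norm_num at this
      exact this.congr fun t => by ring)
  have heq : (fun t : ℝ => (-(2*t) - t * (-(t^2+2))) * gaussE t)
      = fun t => t^3 * gaussE t := by
    funext t; ring
  rwa [heq] at h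

lemma gaussE_J4 : ∫ t : ℝ, (t ^ 4 - 3 * t ^ 2) * gaussE t = 0 := by
  have h := gaussJ (fun t => -(t^3)) (fun t => -(3*t^2))
    (fun t => by
      have := (hasDerivAt_pow 3 t).neg
      refine this.congr_deriv ?_
      norm_num)
    (by
      apply Integrable.congr ((gaussE_integrable 4).sub ((gaussE_integrable 2).const_mul 3))
      filter_upwards with t
      simp only [Pi.sub_apply]
      ring)
    (by
      have := (gaussE_tendsto_atTop 3).neg
      rw [neg_zero] at this
      exact this.congr fun t => by simp)
    (by
      have := (gaussE_tendsto_atBot 3).neg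
      rw [neg_zero] at this
      exact this.congr fun t => by simp)
  have heq : (fun t : ℝ => (-(3*t^2) - t * (-(t^3))) * gaussE t)
      = fun t => (t^4 - 3*t^2) * gaussE t := by
    funext t; ring
  rwa [heq] at h

lemma gauss_integral_eq (g : ℝ → ℝ) :
    ∫ t, g t ∂(gaussianReal 0 1) = ∫ t, gaussianPDFReal 0 1 t * g t := by
  rw [gaussianReal_of_var_ne_zero 0 one_ne_zero]
  have hmeas : Measurable fun x => (gaussianPDFReal 0 1 x).toNNReal :=
    (measurable_gaussianPDFReal 0 1).real_toNNReal
  have hd : (volume : Measure ℝ).withDensity (gaussianPDF 0 1)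
      = (volume : Measure ℝ).withDensity
        (fun x => ((gaussianPDFReal 0 1 x).toNNReal : ENNReal)) := rfl
  rw [hd, integral_withDensity_eq_integral_smul hmeas]
  congr 1; funext t
  simp [NNReal.smul_def, Real.coe_toNNReal _ (gaussianPDFReal_nonneg 0 1 t)]

lemma gauss_moment_aux (k : ℕ) :
    ∫ t, t ^ k ∂(gaussianReal 0 1) = (Real.sqrt (2 * π))⁻¹ * ∫ t, t ^ k * gaussE t := by
  rw [gauss_integral_eq]
  have h : ∀ t : ℝ, gaussianPDFReal 0 1 t * t ^ k
      = (Real.sqrt (2 * π))⁻¹ * (t ^ k * gaussE t) := fun t => by rw [gaussE_pdf]; ring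
  simp_rw [h]
  rw [integral_const_mul]

lemma gauss_cE : (Real.sqrt (2 * π))⁻¹ * ∫ t, gaussE t = 1 := by
  have h0 : ∫ t, (1:ℝ) ∂(gaussianReal 0 1) = 1 := by simp
  have := gauss_moment_aux 0
  simp only [pow_zero, one_mul] at this
  rw [this] at h0
  exact h0

lemma gauss_m1 : ∫ t, t ∂(gaussianReal 0 1) = 0 := by
  have := gauss_moment_aux 1
  simp only [pow_one] at this
  rw [this, gaussE_J1, mul_zero]

lemma gauss_m2 : ∫ t, t ^ 2 ∂(gaussianReal 0 1) = 1 := by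
  have h := gauss_moment_aux 2
  have hsub : (∫ t : ℝ, t ^ 2 * gaussE t) - (∫ t : ℝ, gaussE t) = 0 := by
    rw [← integral_sub (gaussE_integrable 2) (by simpa using gaussE_integrable 0)]
    rw [← gaussE_J2]
    congr 1; funext t; ring
  rw [h, sub_eq_zero.mp hsub]
  exact gauss_cE

lemma gauss_m3 : ∫ t, t ^ 3 ∂(gaussianReal 0 1) = 0 := by
  rw [gauss_moment_aux 3, gaussE_J3, mul_zero]

lemma gauss_m4 : ∫ t, t ^ 4 ∂(gaussianReal 0 1) = 3 := by
  have h := gauss_moment_aux 4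
  have hsub : (∫ t : ℝ, t ^ 4 * gaussE t) - 3 * (∫ t : ℝ, t ^ 2 * gaussE t) = 0 := by
    rw [← integral_const_mul, ← integral_sub (gaussE_integrable 4)
      ((gaussE_integrable 2).const_mul 3), ← gaussE_J4]
    congr 1; funext t; ring
  have h2 : (∫ t : ℝ, t ^ 4 * gaussE t) = 3 * ∫ t : ℝ, t ^ 2 * gaussE t := by linarith
  have hm2 := gauss_m2
  rw [gauss_moment_aux 2] at hm2
  rw [h, h2]
  calc (Real.sqrt (2 * π))⁻¹ * (3 * ∫ t : ℝ, t ^ 2 * gaussE t)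
      = 3 * ((Real.sqrt (2 * π))⁻¹ * ∫ t : ℝ, t ^ 2 * gaussE t) := by ring
    _ = 3 := by rw [hm2]; norm_num

lemma gauss_integrable (k : ℕ) : Integrable (fun t => t ^ k) (gaussianReal 0 1) := by
  rw [gaussianReal_of_var_ne_zero 0 one_ne_zero]
  rw [integrable_withDensity_iff (measurable_gaussianPDF 0 1)
    (Filter.Eventually.of_forall fun x => ENNReal.ofReal_lt_top)]
  have : (fun t : ℝ => t ^ k * (gaussianPDF 0 1 t).toReal)
      = fun t => (Real.sqrt (2 * π))⁻¹ * (t ^ k * gaussE t) := by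
    funext t
    rw [gaussianPDF, ENNReal.toReal_ofReal (gaussianPDFReal_nonneg 0 1 t), gaussE_pdf]
    ring
  rw [this]
  exact (gaussE_integrable k).const_mul _

lemma integrable_mul_of_sq {α : Type*} [MeasurableSpace α] {μ : Measure α} {f g : α → ℝ}
    (hf2 : Integrable (fun a => f a ^ 2) μ) (hg2 : Integrable (fun a => g a ^ 2) μ)
    (hm : AEStronglyMeasurable (fun a => f a * g a) μ) :
    Integrable (fun a => f a * g a) μ := by
  refine Integrable.mono' (((hf2.add hg2)).const_mul (1/2)) hm ?_
  filter_upwards with a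
  have h := sq_nonneg (|f a| - |g a|)
  have h2 : ‖f a * g a‖ = |f a| * |g a| := by rw [Real.norm_eq_abs, abs_mul]
  rw [h2]
  have e1 : |f a| ^ 2 = f a ^ 2 := sq_abs _
  have e2 : |g a| ^ 2 = g a ^ 2 := sq_abs _
  simp only [Pi.add_apply]
  nlinarith [abs_nonneg (f a), abs_nonneg (g a)]

section NuLevel
variable {ι : Type*} [Fintype ι] [DecidableEq ι]

local notation "ν" => (Measure.pi fun _ : ι => gaussianReal 0 1)

lemma nu_M2 (i j : ι) :
    ∫ y : ι → ℝ, y i * y j ∂ν = if i = j then 1 else 0 := by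
  by_cases h : i = j
  · subst h
    rw [if_pos rfl]
    have he : (fun y : ι → ℝ => y i * y i) = fun y => (fun t : ℝ => t ^ 2) (y i) := by
      funext y; ring
    rw [he, pi_integral_eval (gaussianReal 0 1) (fun t : ℝ => t ^ 2) i, gauss_m2]
  · rw [if_neg h]
    have h2 := pi_integral_eval_two (ι := ι) (gaussianReal 0 1)
      (fun t : ℝ => t) (fun t : ℝ => t) h
    rw [h2]
    have : ∫ t : ℝ, t ∂(gaussianReal 0 1) = 0 := gauss_m1
    rw [this, mul_zero]

lemma nu_mon4_a (i : ι) :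
    ∫ y : ι → ℝ, (y i * y i) * (y i * y i) ∂ν = 3 := by
  have he : (fun y : ι → ℝ => (y i * y i) * (y i * y i))
      = fun y => (fun t : ℝ => t ^ 4) (y i) := by funext y; ring
  rw [he, pi_integral_eval (gaussianReal 0 1) (fun t : ℝ => t ^ 4) i, gauss_m4]

lemma nu_mon4_b (i j : ι) (h : j ≠ i) :
    ∫ y : ι → ℝ, (y i * y i) * (y i * y j) ∂ν = 0 := by
  have he : (fun y : ι → ℝ => (y i * y i) * (y i * y j))
      = fun y => (fun t : ℝ => t ^ 3) (y i) * (fun t : ℝ => t) (y j) := by funext y; ring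
  rw [he, pi_integral_eval_two (gaussianReal 0 1) (fun t : ℝ => t ^ 3) (fun t : ℝ => t)
    (fun h' => h h'.symm), gauss_m3, zero_mul]

lemma nu_mon4_c (i j : ι) (h : j ≠ i) :
    ∫ y : ι → ℝ, (y i * y j) * (y i * y i) ∂ν = 0 := by
  have he : (fun y : ι → ℝ => (y i * y j) * (y i * y i))
      = fun y => (fun t : ℝ => t ^ 3) (y i) * (fun t : ℝ => t) (y j) := by funext y; ring
  rw [he, pi_integral_eval_two (gaussianReal 0 1) (fun t : ℝ => t ^ 3) (fun t : ℝ => t)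
    (fun h' => h h'.symm), gauss_m3, zero_mul]

lemma nu_mon4_d (i j : ι) (h : j ≠ i) :
    ∫ y : ι → ℝ, (y i * y j) * (y i * y j) ∂ν = 1 := by
  have he : (fun y : ι → ℝ => (y i * y j) * (y i * y j))
      = fun y => (fun t : ℝ => t ^ 2) (y i) * (fun t : ℝ => t ^ 2) (y j) := by funext y; ring
  rw [he, pi_integral_eval_two (gaussianReal 0 1) (fun t : ℝ => t ^ 2) (fun t : ℝ => t ^ 2)
    (fun h' => h h'.symm), gauss_m2, one_mul]

lemma nu_mon4_e (i j j' : ι) (hj : j ≠ i) (hj' : j' ≠ i) (hjj : j ≠ j') :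
    ∫ y : ι → ℝ, (y i * y j) * (y i * y j') ∂ν = 0 := by
  have he : (fun y : ι → ℝ => (y i * y j) * (y i * y j'))
      = fun y => (fun t : ℝ => t ^ 2) (y i)
          * ((fun t : ℝ => t) (y j) * (fun t : ℝ => t) (y j')) := by funext y; ring
  rw [he, pi_integral_eval_three (gaussianReal 0 1) (fun t : ℝ => t ^ 2)
    (fun t : ℝ => t) (fun t : ℝ => t) (fun h' => hj h'.symm) (fun h' => hj' h'.symm) hjj,
    gauss_m1, zero_mul, mul_zero]

lemma nu_M4 (i j j' : ι) :
    ∫ y : ι → ℝ, (y i * y j) * (y i * y j') ∂ν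
      = (if j = j' then 1 else 0)
        + 2 * ((if j = i then 1 else 0) * (if j' = i then 1 else 0)) := by
  by_cases hj : j = i
  · by_cases hj' : j' = i
    · simp only [hj, hj', if_pos rfl]
      rw [nu_mon4_a]
      norm_num
    · simp only [hj, if_pos rfl, if_neg hj', if_neg (show i ≠ j' from fun h => hj' h.symm)]
      rw [nu_mon4_b i j' hj']
      norm_num
  · by_cases hj' : j' = i
    · simp only [hj', if_pos rfl, if_neg hj,
        if_neg (show j ≠ i from hj)]
      rw [nu_mon4_c i j hj]
      norm_num
    · by_cases hjj : j = j'
      · simp only [hjj, if_pos rfl, if_neg hj']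
        rw [nu_mon4_d i j' hj']
        norm_num
      · simp only [if_neg hjj, if_neg hj, if_neg hj']
        rw [nu_mon4_e i j j' hj hj' hjj]
        norm_num

lemma nu_meas_mon (i j : ι) : Measurable fun y : ι → ℝ => y i * y j :=
  (measurable_pi_apply i).mul (measurable_pi_apply j)

lemma nu_integrable_sq (i j : ι) :
    Integrable (fun y : ι → ℝ => (y i * y j) ^ 2) ν := by
  by_cases h : i = j
  · subst h
    have he : (fun y : ι → ℝ => (y i * y i) ^ 2) = fun y => (fun t : ℝ => t ^ 4) (y i) := by
      funext y; ring
    rw [he]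
    exact pi_integrable_eval (gaussianReal 0 1) _ (gauss_integrable 4) i
  · have he : (fun y : ι → ℝ => (y i * y j) ^ 2)
        = fun y => (fun t : ℝ => t ^ 2) (y i) * (fun t : ℝ => t ^ 2) (y j) := by
      funext y; ring
    rw [he]
    exact pi_integrable_eval_two (gaussianReal 0 1) _ _ (gauss_integrable 2)
      (gauss_integrable 2) h

lemma nu_integrable_mon (i j : ι) :
    Integrable (fun y : ι → ℝ => y i * y j) ν := by
  refine integrable_mul_of_sq ?_ ?_ (nu_meas_mon i j).aestronglyMeasurable
  · have := pi_integrable_eval (ι := ι) (gaussianReal 0 1) (fun t : ℝ => t ^ 2)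
      (gauss_integrable 2) i
    simpa using this
  · have := pi_integrable_eval (ι := ι) (gaussianReal 0 1) (fun t : ℝ => t ^ 2)
      (gauss_integrable 2) j
    simpa using this

lemma nu_integrable_mon4 (i j i' j' : ι) :
    Integrable (fun y : ι → ℝ => (y i * y j) * (y i' * y j')) ν :=
  integrable_mul_of_sq (nu_integrable_sq i j) (nu_integrable_sq i' j')
    ((nu_meas_mon i j).mul (nu_meas_mon i' j')).aestronglyMeasurable

lemma nu_S_integrable (c : ι → ℝ) (i : ι) :
    Integrable (fun y : ι → ℝ => ∑ j, c j * (y i * y j)) ν :=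
  integrable_finset_sum _ fun j _ => (nu_integrable_mon i j).const_mul (c j)

lemma nu_S_meas (c : ι → ℝ) (i : ι) :
    Measurable (fun y : ι → ℝ => ∑ j, c j * (y i * y j)) :=
  Finset.measurable_sum _ fun j _ => (nu_meas_mon i j).const_mul (c j)

lemma nu_SS_expand (c : ι → ℝ) (i : ι) :
    (fun y : ι → ℝ => (∑ j, c j * (y i * y j)) * (∑ j, c j * (y i * y j)))
      = fun y => ∑ j, ∑ j', (c j * c j') * ((y i * y j) * (y i * y j')) := by
  funext y
  rw [Finset.sum_mul_sum]
  exact Finset.sum_congr rfl fun j _ => Finset.sum_congr rfl fun j' _ => by ring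

lemma nu_SS_integrable (c : ι → ℝ) (i : ι) :
    Integrable (fun y : ι → ℝ =>
      (∑ j, c j * (y i * y j)) * (∑ j, c j * (y i * y j))) ν := by
  rw [nu_SS_expand]
  exact integrable_finset_sum _ fun j _ => integrable_finset_sum _ fun j' _ =>
    (nu_integrable_mon4 i j i j').const_mul _

lemma nu_S_integral (c : ι → ℝ) (i : ι) :
    ∫ y : ι → ℝ, ∑ j, c j * (y i * y j) ∂ν = c i := by
  rw [integral_finset_sum _ (fun j _ => (nu_integrable_mon i j).const_mul (c j))]
  have h : ∀ j : ι, ∫ y : ι → ℝ, c j * (y i * y j) ∂ν = c j * (if i = j then 1 else 0) := by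
    intro j
    rw [integral_const_mul, nu_M2]
  rw [Finset.sum_congr rfl fun j _ => h j]
  simp

lemma nu_SS_integral (c : ι → ℝ) (i : ι) :
    ∫ y : ι → ℝ, (∑ j, c j * (y i * y j)) * (∑ j, c j * (y i * y j)) ∂ν
      = 2 * c i ^ 2 + ∑ j, c j ^ 2 := by
  rw [nu_SS_expand]
  rw [integral_finset_sum _ (fun j _ => integrable_finset_sum _ (fun j' _ =>
    (nu_integrable_mon4 i j i j').const_mul _))]
  have h1 : ∀ j : ι, ∫ y : ι → ℝ, ∑ j', (c j * c j') * ((y i * y j) * (y i * y j')) ∂ν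
      = ∑ j', (c j * c j') * ((if j = j' then 1 else 0)
          + 2 * ((if j = i then 1 else 0) * (if j' = i then 1 else 0))) := by
    intro j
    rw [integral_finset_sum _ (fun j' _ => (nu_integrable_mon4 i j i j').const_mul _)]
    exact Finset.sum_congr rfl fun j' _ => by rw [integral_const_mul, nu_M4]
  rw [Finset.sum_congr rfl fun j _ => h1 j]
  have h2 : ∀ j : ι, ∑ j', (c j * c j') * ((if j = j' then 1 else 0)
        + 2 * ((if j = i then 1 else 0) * (if j' = i then 1 else 0)))
      = ∑ j', ((if j = j' then c j * c j' else 0)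
        + (if j = i then (if j' = i then 2 * (c j * c j') else 0) else 0)) := by
    intro j
    refine Finset.sum_congr rfl fun j' _ => ?_
    split_ifs <;> ring
  rw [Finset.sum_congr rfl fun j _ => h2 j]
  have h3 : ∀ j : ι, ∑ j', ((if j = j' then c j * c j' else 0)
        + (if j = i then (if j' = i then 2 * (c j * c j') else 0) else 0))
      = c j * c j + (if j = i then 2 * (c j * c i) else 0) := by
    intro j
    rw [Finset.sum_add_distrib]
    congr 1
    · simp
    · by_cases h : j = i <;> simp [h]
  rw [Finset.sum_congr rfl fun j _ => h3 j, Finset.sum_add_distrib]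
  simp only [Finset.sum_ite_eq', Finset.mem_univ, if_pos]
  have : ∑ j : ι, c j * c j = ∑ j : ι, c j ^ 2 :=
    Finset.sum_congr rfl fun j _ => by ring
  rw [this]
  ring

end NuLevel

/-- Lemma 2.3, expectation form: for `n ≥ 2` and
`8 e log n ≤ m ≤ n`, the generalized stochastic diagonal estimator
`EST^m := (1/m) Σ_k ω^{(k)} ⊙ (B ω^{(k)})` satisfies
`E‖EST^m − diag B‖₂² ≤ (64 n (e log n)³ / m) ‖B‖_∞²`, where
`‖B‖_∞ := max_i ‖[B]_{i,:}‖₁`. -/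
theorem stmt_9 (n m : ℕ) (hn : 2 ≤ n) (B : Matrix (Fin n) (Fin n) ℝ)
    (hm1 : 8 * Real.exp 1 * Real.log n ≤ (m : ℝ)) (hm2 : m ≤ n)
    (P : Measure (Fin m → Fin n → ℝ))
    (hP : P = Measure.pi fun _ : Fin m => Measure.pi fun _ : Fin n => gaussianReal 0 1) :
    (∫ x, ∑ i, ((1 / (m : ℝ)) * (∑ k, x k i * B.mulVec (x k) i) - B i i) ^ 2 ∂P)
      ≤ 64 * n * (Real.exp 1 * Real.log n) ^ 3 / m * (⨆ i, ∑ j, |B i j|) ^ 2 := by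
  subst hP
  -- basic numeric facts
  have hlog2 : (0.6931 : ℝ) ≤ Real.log 2 := le_of_lt (by
    have := Real.log_two_gt_d9; linarith)
  have hexp1 : (2.7182 : ℝ) ≤ Real.exp 1 := le_of_lt (by
    have := Real.exp_one_gt_d9; linarith)
  have hlogn : Real.log 2 ≤ Real.log n := by
    apply Real.log_le_log (by norm_num)
    exact_mod_cast hn
  have he1 : (1 : ℝ) ≤ Real.exp 1 * Real.log n := by nlinarith
  have hm0 : 0 < m := by
    by_contra h
    push_neg at h
    interval_cases m
    simp only [Nat.cast_zero] at hm1
    nlinarith [Real.exp_pos 1]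
  have hmR : (0 : ℝ) < (m : ℝ) := by exact_mod_cast hm0
  -- abbreviations
  set ν : Measure (Fin n → ℝ) := Measure.pi fun _ : Fin n => gaussianReal 0 1 with hν
  set S : Fin n → (Fin n → ℝ) → ℝ := fun i y => ∑ j, B i j * (y i * y j) with hSdef
  have hS1 : ∀ i, ∫ y, S i y ∂ν = B i i := fun i => nu_S_integral (fun j => B i j) i
  have hSS : ∀ i, ∫ y, S i y * S i y ∂ν = 2 * B i i ^ 2 + ∑ j, B i j ^ 2 :=
    fun i => nu_SS_integral (fun j => B i j) i
  have hSint : ∀ i, Integrable (S i) ν := fun i => nu_S_integrable (fun j => B i j) i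
  have hSSint : ∀ i, Integrable (fun y => S i y * S i y) ν :=
    fun i => nu_SS_integrable (fun j => B i j) i
  -- outer level facts
  haveI : IsProbabilityMeasure ν := by rw [hν]; infer_instance
  set P : Measure (Fin m → Fin n → ℝ) := Measure.pi fun _ : Fin m => ν with hPdef
  have hpair_int : ∀ (i : Fin n) (k l : Fin m),
      Integrable (fun x : Fin m → Fin n → ℝ => S i (x k) * S i (x l)) P := by
    intro i k l
    by_cases h : k = l
    · subst h
      have := pi_integrable_eval (ι := Fin m) ν (fun y => S i y * S i y) (hSSint i) k
      simpa using this
    · exact pi_integrable_eval_two ν (S i) (S i) (hSint i) (hSint i) h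
  have hpair_val : ∀ (i : Fin n) (k l : Fin m),
      ∫ x, S i (x k) * S i (x l) ∂P
        = if k = l then 2 * B i i ^ 2 + ∑ j, B i j ^ 2 else B i i ^ 2 := by
    intro i k l
    by_cases h : k = l
    · subst h
      rw [if_pos rfl]
      have := pi_integral_eval (ι := Fin m) ν (fun y => S i y * S i y) k
      rw [hSS i] at this
      simpa using this
    · rw [if_neg h, pi_integral_eval_two ν (S i) (S i) h, hS1 i]
      ring
  have hT_int : ∀ i : Fin n,
      Integrable (fun x : Fin m → Fin n → ℝ => ∑ k, S i (x k)) P :=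
    fun i => integrable_finset_sum _ fun k _ => pi_integrable_eval ν (S i) (hSint i) k
  have hT_val : ∀ i : Fin n, ∫ x, ∑ k, S i (x k) ∂P = (m : ℝ) * B i i := by
    intro i
    rw [integral_finset_sum _ (fun k _ => pi_integrable_eval ν (S i) (hSint i) k)]
    rw [Finset.sum_congr rfl fun k _ => (pi_integral_eval ν (S i) k).trans (hS1 i)]
    simp [Finset.card_univ, mul_comm]
  have hTT_expand : ∀ i : Fin n, (fun x : Fin m → Fin n → ℝ =>
        (∑ k, S i (x k)) * (∑ l, S i (x l)))
      = fun x => ∑ k, ∑ l, S i (x k) * S i (x l) := by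
    intro i; funext x; rw [Finset.sum_mul_sum]
  have hTT_int : ∀ i : Fin n, Integrable (fun x : Fin m → Fin n → ℝ =>
      (∑ k, S i (x k)) * (∑ l, S i (x l))) P := by
    intro i
    rw [hTT_expand i]
    exact integrable_finset_sum _ fun k _ => integrable_finset_sum _ fun l _ =>
      hpair_int i k l
  have hTT_val : ∀ i : Fin n, ∫ x, (∑ k, S i (x k)) * (∑ l, S i (x l)) ∂P
      = (m : ℝ) * (2 * B i i ^ 2 + ∑ j, B i j ^ 2) + ((m : ℝ) ^ 2 - m) * B i i ^ 2 := by
    intro i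
    rw [hTT_expand i]
    rw [integral_finset_sum _ (fun k _ => integrable_finset_sum _ fun l _ =>
      hpair_int i k l)]
    rw [Finset.sum_congr rfl fun k _ => integral_finset_sum _ fun l _ => hpair_int i k l]
    rw [Finset.sum_congr rfl fun k _ => Finset.sum_congr rfl fun l _ => hpair_val i k l]
    have hinner : ∀ k : Fin m,
        ∑ l, (if k = l then 2 * B i i ^ 2 + ∑ j, B i j ^ 2 else B i i ^ 2)
        = (m : ℝ) * B i i ^ 2 + (B i i ^ 2 + ∑ j, B i j ^ 2) := by
      intro k
      have hsplit : ∀ l : Fin m,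
          (if k = l then 2 * B i i ^ 2 + ∑ j, B i j ^ 2 else B i i ^ 2)
          = B i i ^ 2 + (if k = l then B i i ^ 2 + ∑ j, B i j ^ 2 else 0) := by
        intro l; split_ifs <;> ring
      rw [Finset.sum_congr rfl fun l _ => hsplit l, Finset.sum_add_distrib,
        Finset.sum_const, Finset.card_univ, Fintype.card_fin, nsmul_eq_mul,
        Finset.sum_ite_eq Finset.univ k fun _ => B i i ^ 2 + ∑ j, B i j ^ 2]
      simp
    rw [Finset.sum_congr rfl fun k _ => hinner k, Finset.sum_const, Finset.card_univ,
      Fintype.card_fin, nsmul_eq_mul]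
    ring
  -- per-i value of the squared deviation
  have hGexp : ∀ i : Fin n, (fun x : Fin m → Fin n → ℝ =>
        ((1 / (m : ℝ)) * (∑ k, S i (x k)) - B i i) ^ 2)
      = fun x => (1 / (m : ℝ)) ^ 2 * ((∑ k, S i (x k)) * (∑ l, S i (x l)))
          - (2 * B i i * (1 / (m : ℝ))) * (∑ k, S i (x k)) + B i i ^ 2 := by
    intro i; funext x; ring
  have hG_int : ∀ i : Fin n, Integrable (fun x : Fin m → Fin n → ℝ =>
      ((1 / (m : ℝ)) * (∑ k, S i (x k)) - B i i) ^ 2) P := by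
    intro i
    rw [hGexp i]
    exact ((((hTT_int i).const_mul _).sub ((hT_int i).const_mul _)).add
      (integrable_const _))
  have hG_val : ∀ i : Fin n, ∫ x, ((1 / (m : ℝ)) * (∑ k, S i (x k)) - B i i) ^ 2 ∂P
      = (1 / (m : ℝ)) * (B i i ^ 2 + ∑ j, B i j ^ 2) := by
    intro i
    rw [hGexp i]
    have h1 : Integrable (fun x : Fin m → Fin n → ℝ =>
        (1 / (m : ℝ)) ^ 2 * ((∑ k, S i (x k)) * (∑ l, S i (x l)))
          - (2 * B i i * (1 / (m : ℝ))) * (∑ k, S i (x k))) P :=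
      ((hTT_int i).const_mul _).sub ((hT_int i).const_mul _)
    rw [integral_add h1 (integrable_const _)]
    rw [integral_sub ((hTT_int i).const_mul _) ((hT_int i).const_mul _)]
    rw [integral_const_mul, integral_const_mul, hTT_val i, hT_val i, integral_const]
    simp only [measure_univ, probReal_univ, ENNReal.toReal_one, smul_eq_mul, one_mul]
    field_simp
    ring
  -- rewrite the original integrand
  have hrw : (fun x : Fin m → Fin n → ℝ =>
        ∑ i, ((1 / (m : ℝ)) * (∑ k, x k i * B.mulVec (x k) i) - B i i) ^ 2)
      = fun x => ∑ i, ((1 / (m : ℝ)) * (∑ k, S i (x k)) - B i i) ^ 2 := by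
    funext x
    refine Finset.sum_congr rfl fun i _ => ?_
    have hsum : (∑ k, x k i * B.mulVec (x k) i) = ∑ k, S i (x k) := by
      refine Finset.sum_congr rfl fun k _ => ?_
      rw [Matrix.mulVec, dotProduct, Finset.mul_sum]
      exact Finset.sum_congr rfl fun j _ => by ring
    rw [hsum]
  rw [hrw, integral_finset_sum _ fun i _ => hG_int i]
  rw [Finset.sum_congr rfl fun i _ => hG_val i]
  -- the bound
  set C : ℝ := ⨆ i, ∑ j, |B i j| with hCdef
  have hrowC : ∀ i : Fin n, ∑ j, |B i j| ≤ C := by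
    intro i
    rw [hCdef]
    exact le_ciSup (f := fun i : Fin n => ∑ j, |B i j|)
      (Set.Finite.bddAbove (Set.finite_range _)) i
  have hi0 : Nonempty (Fin n) := ⟨⟨0, by omega⟩⟩
  have hC0 : 0 ≤ C := le_trans (Finset.sum_nonneg fun j _ => abs_nonneg _)
    (hrowC (Classical.arbitrary (Fin n)))
  have hstep : ∀ i : Fin n,
      (1 / (m : ℝ)) * (B i i ^ 2 + ∑ j, B i j ^ 2) ≤ (1 / (m : ℝ)) * (2 * C ^ 2) := by
    intro i
    apply mul_le_mul_of_nonneg_left _ (by positivity)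
    have h1 : B i i ^ 2 ≤ ∑ j, B i j ^ 2 :=
      Finset.single_le_sum (f := fun j => B i j ^ 2) (fun j _ => sq_nonneg _)
        (Finset.mem_univ i)
    have h2 : ∑ j, B i j ^ 2 ≤ (∑ j, |B i j|) ^ 2 := by
      have hterm : ∀ j : Fin n, B i j ^ 2 ≤ |B i j| * ∑ j', |B i j'| := by
        intro j
        have : |B i j| ≤ ∑ j', |B i j'| :=
          Finset.single_le_sum (f := fun j' => |B i j'|) (fun j' _ => abs_nonneg _)
            (Finset.mem_univ j)
        calc B i j ^ 2 = |B i j| * |B i j| := by rw [← abs_mul, abs_mul_self]; ring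
          _ ≤ |B i j| * ∑ j', |B i j'| := by
              exact mul_le_mul_of_nonneg_left this (abs_nonneg _)
      calc ∑ j, B i j ^ 2 ≤ ∑ j, |B i j| * ∑ j', |B i j'| :=
            Finset.sum_le_sum fun j _ => hterm j
        _ = (∑ j, |B i j|) ^ 2 := by rw [← Finset.sum_mul]; ring
    have h3 : (∑ j, |B i j|) ^ 2 ≤ C ^ 2 :=
      pow_le_pow_left₀ (Finset.sum_nonneg fun j _ => abs_nonneg _) (hrowC i) 2
    nlinarith
  calc ∑ i, (1 / (m : ℝ)) * (B i i ^ 2 + ∑ j, B i j ^ 2)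
      ≤ ∑ _i : Fin n, (1 / (m : ℝ)) * (2 * C ^ 2) := Finset.sum_le_sum fun i _ => hstep i
    _ = 2 * n / m * C ^ 2 := by
        rw [Finset.sum_const, Finset.card_univ, Fintype.card_fin, nsmul_eq_mul]
        ring
    _ ≤ 64 * n * (Real.exp 1 * Real.log n) ^ 3 / m * C ^ 2 := by
        apply mul_le_mul_of_nonneg_right _ (sq_nonneg C)
        rw [div_le_div_iff₀ hmR hmR]
        have h3 : (1 : ℝ) ≤ (Real.exp 1 * Real.log n) ^ 3 := by
          simpa using pow_le_pow_left₀ (by norm_num : (0:ℝ) ≤ 1) he1 3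
        nlinarith [mul_nonneg (mul_nonneg (sub_nonneg.mpr h3)
          (Nat.cast_nonneg (α := ℝ) n)) hmR.le]
end
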